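/- arXiv:1311.2369 — 4 statements merged into one kernel-verified Lean document; each statement's English description precedes it below -/
import Mathlib

section
/- (Hyperplane separation lower bound) Let S ∈ ℝ_{≥0}^{f×v} be a nonnegative matrix and W ∈ ℝ^{f×v} be any matrix, and set α := max{⟨W,R⟩ : R ∈ {0,1}^{f×v}, rank(R) ≤ 1}. Then ⟨W,S⟩ ≤ rk₊(S) · α · ‖S‖_∞. In particular, if S is the slack matrix of a polytope P of dimension at least 1, then xc(P) · ‖S‖_∞ · α ≥ ⟨W,S⟩. -/
/-- The extension complexity of a set `P ⊆ ℝ^ι`. -/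
noncomputable def xc {ι : Type*} (P : Set (ι → ℝ)) : ℕ :=
  sInf {r : ℕ | ∃ (d : ℕ) (A : Matrix (Fin r) (Fin d) ℝ) (b : Fin r → ℝ)
    (π : (Fin d → ℝ) →ₗ[ℝ] (ι → ℝ)),
    π '' {y | A.mulVec y ≤ b} = P}

/-- The nonnegative rank of a matrix. -/
noncomputable def nonnegRank {f v : ℕ} (S : Matrix (Fin f) (Fin v) ℝ) : ℕ :=
  sInf {r : ℕ | ∃ (U : Matrix (Fin f) (Fin r) ℝ) (V : Matrix (Fin r) (Fin v) ℝ),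
    (∀ i l, 0 ≤ U i l) ∧ (∀ l j, 0 ≤ V l j) ∧ S = U * V}

/-- The Frobenius inner product `⟨W, S⟩ = Σ_{i,j} W_{ij}·S_{ij}`. -/
def frob {f v : ℕ} (W S : Matrix (Fin f) (Fin v) ℝ) : ℝ :=
  ∑ i, ∑ j, W i j * S i j


section Aux
open Finset
set_option linter.unusedSectionVars false
set_option linter.unusedVariables false

variable {ι : Type*} [Fintype ι] [DecidableEq ι]

lemma cone_caratheodory {E : Type*} [AddCommGroup E] [Module ℝ E]
    (w : ι → E) (s : Finset ι) :
    ∀ (c : ι → ℝ), (∀ i, 0 ≤ c i) →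
    ∃ (t : Finset ι) (c' : ι → ℝ), t ⊆ s ∧ LinearIndependent ℝ (fun i : t => w i) ∧
      (∀ i, 0 ≤ c' i) ∧ ∑ i ∈ t, c' i • w i = ∑ i ∈ s, c i • w i := by
  induction s using Finset.strongInduction with
  | _ s ih =>
    intro c hc
    by_cases hli : LinearIndependent ℝ (fun i : s => w i)
    · exact ⟨s, c, subset_rfl, hli, hc, rfl⟩
    · obtain ⟨g, hg0, i₁, hi₁⟩ := Fintype.not_linearIndependent_iff.mp hli
      set g' : ι → ℝ := fun i => if h : i ∈ s then g ⟨i, h⟩ else 0 with hg'def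
      have hg'sum : ∑ i ∈ s, g' i • w i = 0 := by
        rw [← Finset.sum_attach s (fun i => g' i • w i), ← hg0, Finset.univ_eq_attach]
        refine Finset.sum_congr rfl fun i _ => ?_
        simp [g', i.2]
      have hg'out : ∀ i ∉ s, g' i = 0 := fun i hi => by simp [g', hi]
      have key : ∀ g0 : ι → ℝ, (∑ i ∈ s, g0 i • w i = 0) → (∀ i ∉ s, g0 i = 0) →
          (∃ i ∈ s, 0 < g0 i) →
          ∃ (t : Finset ι) (c' : ι → ℝ), t ⊆ s ∧ LinearIndependent ℝ (fun i : t => w i) ∧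
            (∀ i, 0 ≤ c' i) ∧ ∑ i ∈ t, c' i • w i = ∑ i ∈ s, c i • w i := by
        rintro g0 hsum hout ⟨i₂, hi₂s, hi₂pos⟩
        have hFne : (s.filter (fun i => 0 < g0 i)).Nonempty :=
          ⟨i₂, Finset.mem_filter.mpr ⟨hi₂s, hi₂pos⟩⟩
        obtain ⟨i0, hi0F, hi0min⟩ :=
          Finset.exists_min_image (s.filter (fun i => 0 < g0 i)) (fun i => c i / g0 i) hFne
        have hi0s : i0 ∈ s := (Finset.mem_filter.mp hi0F).1
        have hg0i0 : 0 < g0 i0 := (Finset.mem_filter.mp hi0F).2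
        set τ := c i0 / g0 i0 with hτdef
        have hτ0 : 0 ≤ τ := div_nonneg (hc i0) hg0i0.le
        set c'' : ι → ℝ := fun i => c i - τ * g0 i with hc''def
        have hc''nn : ∀ i, 0 ≤ c'' i := by
          intro i
          by_cases hi : i ∈ s
          · by_cases hpos : 0 < g0 i
            · have h1 : τ ≤ c i / g0 i := hi0min i (Finset.mem_filter.mpr ⟨hi, hpos⟩)
              have h2 : τ * g0 i ≤ c i := (le_div_iff₀ hpos).mp h1
              simpa [c''] using sub_nonneg.mpr h2
            · have h1 : τ * g0 i ≤ 0 :=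
                mul_nonpos_of_nonneg_of_nonpos hτ0 (not_lt.mp hpos)
              have := hc i
              simp only [c'']
              linarith
          · simp [c'', hout i hi, hc i]
        have hc''i0 : c'' i0 = 0 := by
          simp [c'', hτdef, div_mul_cancel₀ _ hg0i0.ne']
        have hsum'' : ∑ i ∈ s.erase i0, c'' i • w i = ∑ i ∈ s, c i • w i := by
          rw [Finset.sum_erase _ (by rw [hc''i0, zero_smul])]
          have h1 : ∑ i ∈ s, c'' i • w i
              = ∑ i ∈ s, c i • w i - τ • ∑ i ∈ s, g0 i • w i := by
            rw [Finset.smul_sum, ← Finset.sum_sub_distrib]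
            refine Finset.sum_congr rfl fun i _ => ?_
            rw [smul_smul, ← sub_smul]
          rw [h1, hsum, smul_zero, sub_zero]
        obtain ⟨t, c', hts, hli', hc', heq⟩ :=
          ih (s.erase i0) (Finset.erase_ssubset hi0s) c'' hc''nn
        exact ⟨t, c', hts.trans (Finset.erase_subset _ _), hli', hc', by rw [heq, hsum'']⟩
      rcases lt_or_gt_of_ne hi₁ with hneg | hpos
      · refine key (-g') (by simp [hg'sum]) (fun i hi => by simp [hg'out i hi]) ?_
        refine ⟨i₁, i₁.2, ?_⟩
        have : g' (i₁ : ι) = g i₁ := by simp [g', i₁.2]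
        simp only [Pi.neg_apply, this]
        linarith
      · refine key g' hg'sum hg'out ⟨i₁, i₁.2, ?_⟩
        have : g' (i₁ : ι) = g i₁ := by simp [g', i₁.2]
        rw [this]; exact hpos


lemma isClosed_fgcone {n : Type*} [Fintype n] (w : ι → EuclideanSpace ℝ n)
    (hcar : ∀ (s : Finset ι) (c : ι → ℝ), (∀ i, 0 ≤ c i) →
      ∃ (t : Finset ι) (c' : ι → ℝ), t ⊆ s ∧ LinearIndependent ℝ (fun i : t => w i) ∧
        (∀ i, 0 ≤ c' i) ∧ ∑ i ∈ t, c' i • w i = ∑ i ∈ s, c i • w i) :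
    IsClosed {x : EuclideanSpace ℝ n | ∃ c : ι → ℝ, (∀ i, 0 ≤ c i) ∧ x = ∑ i, c i • w i} := by
  classical
  have hset : {x : EuclideanSpace ℝ n | ∃ c : ι → ℝ, (∀ i, 0 ≤ c i) ∧ x = ∑ i, c i • w i}
      = ⋃ (t : {t : Finset ι // LinearIndependent ℝ (fun i : t => w i)}),
        (fun c : (↥(t : Finset ι) → ℝ) => ∑ i, c i • w (i : ι)) ''
          {c | ∀ i, 0 ≤ c i} := by
    ext z
    constructor
    · rintro ⟨c, hc, rfl⟩
      obtain ⟨t, c', hts, hli, hc', heq⟩ := hcar Finset.univ c hc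
      refine Set.mem_iUnion.mpr ⟨⟨t, hli⟩, ⟨fun i => c' (i : ι), fun i => hc' _, ?_⟩⟩
      simp only
      rw [Finset.sum_coe_sort t (fun i => c' i • w i), heq]
    · intro hz
      obtain ⟨t, c, hc, rfl⟩ := Set.mem_iUnion.mp hz
      refine ⟨fun i => if h : i ∈ (t : Finset ι) then c ⟨i, h⟩ else 0,
        fun i => ?_, ?_⟩
      · by_cases h : i ∈ (t : Finset ι)
        · simpa [h] using hc ⟨i, h⟩
        · simp [h]
      simp only
      rw [← Finset.sum_subset (Finset.subset_univ (t : Finset ι))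
        (fun i _ hi => by simp [hi])]
      rw [← Finset.sum_attach (t : Finset ι)
        (fun i => (if h : i ∈ (t : Finset ι) then c ⟨i, h⟩ else 0) • w i)]
      rw [Finset.univ_eq_attach]
      refine Finset.sum_congr rfl fun i _ => ?_
      simp [i.2]
  rw [hset]
  refine isClosed_iUnion_of_finite fun t => ?_
  let L : (↥(t : Finset ι) → ℝ) →ₗ[ℝ] EuclideanSpace ℝ n :=
    { toFun := fun c => ∑ i, c i • w (i : ι)
      map_add' := fun a b => by simp [add_smul, Finset.sum_add_distrib]
      map_smul' := fun m a => by simp [smul_smul, Finset.smul_sum]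
      }
  have hker : LinearMap.ker L = ⊥ := by
    rw [LinearMap.ker_eq_bot']
    intro c hc0
    funext i
    exact Fintype.linearIndependent_iff.mp t.2 c hc0 i
  have hce := LinearMap.isClosedEmbedding_of_injective hker
  have hclosed : IsClosed {c : (↥(t : Finset ι) → ℝ) | ∀ i, 0 ≤ c i} := by
    have : {c : (↥(t : Finset ι) → ℝ) | ∀ i, 0 ≤ c i}
        = ⋂ i, {c : (↥(t : Finset ι) → ℝ) | 0 ≤ c i} := by
      ext c; simp [Set.mem_iInter]
    rw [this]
    exact isClosed_iInter fun i => isClosed_le continuous_const (continuous_apply i)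
  exact hce.isClosedMap _ hclosed


lemma farkas_cone {n : Type*} [Fintype n] (w : ι → (n → ℝ)) (z : n → ℝ)
    (h : ∀ y : n → ℝ, (∀ i, 0 ≤ ∑ k, w i k * y k) → 0 ≤ ∑ k, z k * y k) :
    ∃ c : ι → ℝ, (∀ i, 0 ≤ c i) ∧ ∀ k, z k = ∑ i, c i * w i k := by
  classical
  let L : EuclideanSpace ℝ n ≃ₗ[ℝ] (n → ℝ) := WithLp.linearEquiv 2 ℝ (n → ℝ)
  set W : ι → EuclideanSpace ℝ n := fun i => L.symm (w i) with hW
  set Z : EuclideanSpace ℝ n := L.symm z with hZdef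
  have hWk : ∀ i k, W i k = w i k := fun i k => rfl
  have hZk : ∀ k, Z k = z k := fun k => rfl
  set Kc : Set (EuclideanSpace ℝ n) :=
    {x | ∃ c : ι → ℝ, (∀ i, 0 ≤ c i) ∧ x = ∑ i, c i • W i} with hKc
  have hKclosed : IsClosed Kc := isClosed_fgcone W (cone_caratheodory W)
  let K : ConvexCone ℝ (EuclideanSpace ℝ n) :=
    { carrier := Kc
      smul_mem' := by
        rintro a ha x ⟨c, hc, rfl⟩
        refine ⟨fun i => a * c i, fun i => mul_nonneg ha.le (hc i), ?_⟩
        rw [Finset.smul_sum]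
        exact Finset.sum_congr rfl fun i _ => (smul_smul a (c i) (W i))
      add_mem' := by
        rintro x ⟨c, hc, rfl⟩ y ⟨c', hc', rfl⟩
        refine ⟨fun i => c i + c' i, fun i => add_nonneg (hc i) (hc' i), ?_⟩
        rw [← Finset.sum_add_distrib]
        exact Finset.sum_congr rfl fun i _ => (add_smul (c i) (c' i) (W i)).symm }
  have hne : Kc.Nonempty := ⟨0, fun _ => 0, fun _ => le_rfl, by simp⟩
  have hinner : ∀ a b : EuclideanSpace ℝ n, (inner ℝ a b : ℝ) = ∑ k, a k * b k := by
    intro a b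
    simp [PiLp.inner_apply, RCLike.inner_apply, starRingEnd_apply]
    exact Finset.sum_congr rfl fun k _ => mul_comm _ _
  have hZK : Z ∈ Kc := by
    by_contra hzK
    obtain ⟨y, hy1, hy2⟩ :=
      ProperCone.hyperplane_separation' (E := EuclideanSpace ℝ n)
        (C := { carrier := Kc
                add_mem' := fun hx hy => K.add_mem' hx hy
                zero_mem' := ⟨fun _ => 0, fun _ => le_rfl, by simp⟩
                smul_mem' := by
                  rintro c x ⟨d, hd, rfl⟩
                  refine ⟨fun i => (c : ℝ) * d i, fun i => mul_nonneg c.2 (hd i), ?_⟩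
                  rw [Finset.smul_sum]
                  exact Finset.sum_congr rfl fun i _ => by show ((c : ℝ) • d i • W i) = _; rw [smul_smul]
                isClosed' := hKclosed }) hzK
    have h1 : ∀ i, 0 ≤ ∑ k, w i k * y k := by
      intro i
      have hWi : W i ∈ Kc := by
        refine ⟨fun j => if j = i then 1 else 0, fun j => by positivity, ?_⟩
        simp
      have := hy1 (W i) hWi
      rwa [hinner] at this
    have h2 := h y h1
    have h3 : (inner ℝ y Z : ℝ) = ∑ k, z k * y k := by
      rw [real_inner_comm, hinner]; rfl
    linarith [hy2, h3 ▸ h2, real_inner_comm Z y]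
  obtain ⟨c, hc, hZeq⟩ := hZK
  refine ⟨c, hc, fun k => ?_⟩
  have h4 : z = ∑ i, c i • w i := by
    have h5 := congrArg L hZeq
    rw [L.apply_symm_apply, map_sum] at h5
    rw [h5]
    exact Finset.sum_congr rfl fun i _ => by rw [map_smul, L.apply_symm_apply]
  rw [congrFun h4 k, Finset.sum_apply]
  exact Finset.sum_congr rfl fun i _ => rfl

lemma affine_farkas {r d : ℕ} (A' : Matrix (Fin r) (Fin d) ℝ) (b' : Fin r → ℝ)
    (y0 : Fin d → ℝ) (hy0 : A'.mulVec y0 ≤ b')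
    (φ : (Fin d → ℝ) →ₗ[ℝ] ℝ) (γ : ℝ)
    (hvalid : ∀ y, A'.mulVec y ≤ b' → φ y ≤ γ) :
    ∃ (lam : Fin r → ℝ) (μ : ℝ), (∀ l, 0 ≤ lam l) ∧ 0 ≤ μ ∧
      ∀ y, γ - φ y = μ + ∑ l, lam l * (b' l - A'.mulVec y l) := by
  classical
  set wg : (Fin r ⊕ Unit) → (Fin d ⊕ Unit) → ℝ := fun i =>
    Sum.elim (fun l => Sum.elim (fun k => A' l k) (fun _ => b' l))
      (fun _ => Sum.elim (fun _ => (0:ℝ)) (fun _ => 1)) i with hwg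
  set zg : (Fin d ⊕ Unit) → ℝ :=
    Sum.elim (fun k => φ (fun j => if k = j then 1 else 0)) (fun _ => γ) with hzg
  have hmain : ∀ y : (Fin d ⊕ Unit) → ℝ,
      (∀ i, 0 ≤ ∑ k, wg i k * y k) → 0 ≤ ∑ k, zg k * y k := by
    intro y hy
    set u : Fin d → ℝ := fun k => y (Sum.inl k) with hu
    set t : ℝ := y (Sum.inr ()) with ht
    have hsum : ∀ (a : Fin d → ℝ) (c : ℝ),
        ∑ k : Fin d ⊕ Unit, (Sum.elim a (fun _ => c) k) * y k
          = (∑ k, a k * u k) + c * t := by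
      intro a c
      rw [Fintype.sum_sum_type]
      simp
      rfl
    have htnn : 0 ≤ t := by
      have := hy (Sum.inr ())
      rw [hwg] at this
      simpa [hsum] using this
    have hAl : ∀ l, 0 ≤ A'.mulVec u l + b' l * t := by
      intro l
      have := hy (Sum.inl l)
      rw [hwg] at this
      simp only [Sum.elim_inl] at this
      rw [hsum] at this
      simpa [Matrix.mulVec, dotProduct] using this
    have hφu : ∑ k, zg k * y k = φ u + γ * t := by
      rw [hzg, hsum]
      congr 1
      rw [LinearMap.pi_apply_eq_sum_univ φ u]
      exact Finset.sum_congr rfl fun k _ => by rw [smul_eq_mul, mul_comm]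
    rw [hφu]
    rcases eq_or_lt_of_le htnn with htz | htpos
    · -- t = 0
      have hA0 : ∀ l, 0 ≤ A'.mulVec u l := by
        intro l; have := hAl l; rw [← htz] at this; simpa using this
      by_contra hneg
      push_neg at hneg
      rw [← htz, mul_zero, add_zero] at hneg
      have hφuneg : φ u < 0 := hneg
      set s : ℝ := (γ - φ y0 + 1) / (-φ u) with hs
      have hγy0 : φ y0 ≤ γ := hvalid y0 hy0
      have hspos : 0 < s := div_pos (by linarith) (by linarith)
      have hmem : A'.mulVec (y0 - s • u) ≤ b' := by
        intro l
        have h1 : A'.mulVec (y0 - s • u) l = A'.mulVec y0 l - s * A'.mulVec u l := by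
          rw [Matrix.mulVec_sub, Matrix.mulVec_smul]
          simp
        rw [h1]
        have hh1 := mul_nonneg hspos.le (hA0 l)
        have hh2 := hy0 l
        linarith
      have h2 := hvalid _ hmem
      rw [map_sub, map_smul, smul_eq_mul] at h2
      have h3 : s * (-φ u) = γ - φ y0 + 1 := by
        rw [hs, div_mul_cancel₀]
        linarith
      nlinarith
    · -- 0 < t
      have hmem : A'.mulVec ((-t⁻¹) • u) ≤ b' := by
        intro l
        have h1 : A'.mulVec ((-t⁻¹) • u) l = (-t⁻¹) * A'.mulVec u l := by
          rw [Matrix.mulVec_smul]; simp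
        rw [h1]
        have h2 := hAl l
        have h3 : (0:ℝ) < t⁻¹ := inv_pos.mpr htpos
        have h4 : t * t⁻¹ = 1 := mul_inv_cancel₀ htpos.ne'
        have h5 := mul_nonneg h3.le h2
        have h6 : t⁻¹ * (A'.mulVec u l + b' l * t) = t⁻¹ * A'.mulVec u l + b' l := by
          field_simp
        rw [h6] at h5
        linarith
      have h2 := hvalid _ hmem
      rw [map_smul, smul_eq_mul] at h2
      have h3 : (0:ℝ) < t⁻¹ := inv_pos.mpr htpos
      have h4 : t * t⁻¹ = 1 := mul_inv_cancel₀ htpos.ne'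
      have h5 := mul_le_mul_of_nonneg_left h2 htnn
      have h6 : t * (-t⁻¹ * φ u) = -φ u := by
        rw [show t * (-t⁻¹ * φ u) = -(t * t⁻¹) * φ u from by ring, h4]; ring
      rw [h6] at h5
      linarith
  obtain ⟨c, hc, hck⟩ := farkas_cone wg zg hmain
  refine ⟨fun l => c (Sum.inl l), c (Sum.inr ()), fun l => hc _, hc _, ?_⟩
  intro y
  have hγ : γ = (∑ l, c (Sum.inl l) * b' l) + c (Sum.inr ()) := by
    have := hck (Sum.inr ())
    rw [hzg, hwg] at this
    simpa [Fintype.sum_sum_type] using this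
  have hφ : φ y = ∑ l, c (Sum.inl l) * A'.mulVec y l := by
    rw [LinearMap.pi_apply_eq_sum_univ φ y]
    have hk : ∀ k, φ (fun j => if k = j then 1 else 0) = ∑ l, c (Sum.inl l) * A' l k := by
      intro k
      have := hck (Sum.inl k)
      rw [hzg, hwg] at this
      simpa [Fintype.sum_sum_type] using this
    calc ∑ k, y k • φ (fun j => if k = j then 1 else 0)
        = ∑ k, ∑ l, y k * (c (Sum.inl l) * A' l k) := by
          refine Finset.sum_congr rfl fun k _ => ?_
          rw [hk k, smul_eq_mul, Finset.mul_sum]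
      _ = ∑ l, ∑ k, y k * (c (Sum.inl l) * A' l k) := Finset.sum_comm
      _ = ∑ l, c (Sum.inl l) * A'.mulVec y l := by
          refine Finset.sum_congr rfl fun l _ => ?_
          simp only [Matrix.mulVec, dotProduct, Finset.mul_sum]
          exact Finset.sum_congr rfl fun k _ => by ring
  rw [hγ, hφ]
  have hsplit : ∑ l, c (Sum.inl l) * (b' l - A'.mulVec y l)
      = ∑ l, c (Sum.inl l) * b' l - ∑ l, c (Sum.inl l) * A'.mulVec y l := by
    rw [← Finset.sum_sub_distrib]
    exact Finset.sum_congr rfl fun l _ => by ring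
  simp only
  rw [hsplit]
  ring

lemma swap_mul {f v : ℕ} (W : Matrix (Fin f) (Fin v) ℝ) (a : Fin f → ℝ) (b : Fin v → ℝ) :
    ∑ j, (∑ i, W i j * a i) * b j = ∑ i, (∑ j, W i j * b j) * a i := by
  simp only [Finset.sum_mul]
  rw [Finset.sum_comm]
  exact Finset.sum_congr rfl fun i _ => Finset.sum_congr rfl fun j _ => by ring

lemma boxBound {f v : ℕ} (W : Matrix (Fin f) (Fin v) ℝ) {α : ℝ}
    (hα : IsGreatest {a | ∃ R : Matrix (Fin f) (Fin v) ℝ,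
      (∀ i j, R i j = 0 ∨ R i j = 1) ∧ R.rank ≤ 1 ∧ a = frob W R} α)
    (a : Fin f → ℝ) (b : Fin v → ℝ)
    (ha0 : ∀ i, 0 ≤ a i) (ha1 : ∀ i, a i ≤ 1)
    (hb0 : ∀ j, 0 ≤ b j) (hb1 : ∀ j, b j ≤ 1) :
    ∑ i, ∑ j, W i j * (a i * b j) ≤ α := by
  classical
  set kk : Fin v → ℝ := fun j => ∑ i, W i j * a i with hkk
  set b1 : Fin v → ℝ := fun j => if 0 < kk j then 1 else 0 with hb1def
  set hh : Fin f → ℝ := fun i => ∑ j, W i j * b1 j with hhh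
  set a1 : Fin f → ℝ := fun i => if 0 < hh i then 1 else 0 with ha1def
  have hb10 : ∀ j, 0 ≤ b1 j := fun j => by rw [hb1def]; positivity
  have hb11 : ∀ j, b1 j ≤ 1 := fun j => by rw [hb1def]; dsimp only; split <;> norm_num
  have step1 : ∑ i, ∑ j, W i j * (a i * b j) = ∑ j, kk j * b j := by
    rw [Finset.sum_comm]
    refine Finset.sum_congr rfl fun j _ => ?_
    rw [hkk]; simp only [Finset.sum_mul]
    exact Finset.sum_congr rfl fun i _ => by ring
  have hmono : ∀ (m : ℕ) (k : Fin m → ℝ) (c : Fin m → ℝ), (∀ x, 0 ≤ c x) → (∀ x, c x ≤ 1) →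
      ∑ x, k x * c x ≤ ∑ x, k x * (if 0 < k x then 1 else 0) := by
    intro m k c hc0 hc1
    refine Finset.sum_le_sum fun x _ => ?_
    by_cases h : 0 < k x
    · rw [if_pos h]
      exact mul_le_mul_of_nonneg_left (hc1 x) h.le
    · rw [if_neg h, mul_zero]
      exact mul_nonpos_of_nonpos_of_nonneg (not_lt.mp h) (hc0 x)
  have step2 : ∑ j, kk j * b j ≤ ∑ j, kk j * b1 j := hmono v kk b hb0 hb1
  have step3 : ∑ j, kk j * b1 j = ∑ i, hh i * a i := swap_mul W a b1
  have step4 : ∑ i, hh i * a i ≤ ∑ i, hh i * a1 i := hmono f hh a ha0 ha1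
  set R : Matrix (Fin f) (Fin v) ℝ := Matrix.of (fun i j => a1 i * b1 j) with hR
  have step5 : ∑ i, hh i * a1 i = frob W R := by
    rw [frob, hhh]
    refine Finset.sum_congr rfl fun i _ => ?_
    simp only [Finset.sum_mul, hR, Matrix.of_apply]
    exact Finset.sum_congr rfl fun j _ => by ring
  have hmem : frob W R ∈ {x | ∃ R : Matrix (Fin f) (Fin v) ℝ,
      (∀ i j, R i j = 0 ∨ R i j = 1) ∧ R.rank ≤ 1 ∧ x = frob W R} := by
    refine ⟨R, fun i j => ?_, ?_, rfl⟩
    · rw [hR, ha1def, hb1def]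
      simp only [Matrix.of_apply]
      split <;> split <;> simp
    · set U1 : Matrix (Fin f) (Fin 1) ℝ := Matrix.of (fun i _ => a1 i) with hU1
      set V1 : Matrix (Fin 1) (Fin v) ℝ := Matrix.of (fun _ j => b1 j) with hV1
      have hfact : R = U1 * V1 := by
        ext i j
        simp [hR, hU1, hV1, Matrix.mul_apply]
      rw [hfact]
      calc (U1 * V1).rank ≤ U1.rank := Matrix.rank_mul_le_left U1 V1
        _ ≤ Fintype.card (Fin 1) := Matrix.rank_le_card_width U1
        _ = 1 := by simp
  calc ∑ i, ∑ j, W i j * (a i * b j) = ∑ j, kk j * b j := step1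
    _ ≤ ∑ j, kk j * b1 j := step2
    _ = ∑ i, hh i * a i := step3
    _ ≤ ∑ i, hh i * a1 i := step4
    _ = frob W R := step5
    _ ≤ α := hα.2 hmem

lemma rank1Bound {f v : ℕ} (W : Matrix (Fin f) (Fin v) ℝ) {α β : ℝ}
    (hα : IsGreatest {a | ∃ R : Matrix (Fin f) (Fin v) ℝ,
      (∀ i j, R i j = 0 ∨ R i j = 1) ∧ R.rank ≤ 1 ∧ a = frob W R} α)
    (hα0 : 0 ≤ α) (hβ0 : 0 ≤ β) [Nonempty (Fin f)] [Nonempty (Fin v)]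
    (u : Fin f → ℝ) (w : Fin v → ℝ) (hu : ∀ i, 0 ≤ u i) (hw : ∀ j, 0 ≤ w j)
    (hub : ∀ i j, u i * w j ≤ β) :
    ∑ i, ∑ j, W i j * (u i * w j) ≤ α * β := by
  classical
  rcases eq_or_lt_of_le hβ0 with hβz | hβpos
  · have hz : ∀ i j, u i * w j = 0 := fun i j =>
      le_antisymm (by rw [← hβz] at hub; exact hub i j) (mul_nonneg (hu i) (hw j))
    have : ∑ i, ∑ j, W i j * (u i * w j) = 0 := by
      refine Finset.sum_eq_zero fun i _ => Finset.sum_eq_zero fun j _ => ?_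
      rw [hz i j, mul_zero]
    rw [this, ← hβz, mul_zero]
  · set c : ℝ := Finset.univ.sup' Finset.univ_nonempty u with hc
    obtain ⟨i₀, _, hi₀⟩ := Finset.exists_mem_eq_sup' Finset.univ_nonempty u
    have hcu : ∀ i, u i ≤ c := fun i => Finset.le_sup' u (Finset.mem_univ i)
    have hc0 : 0 ≤ c := le_trans (hu i₀) (hcu i₀)
    rcases eq_or_lt_of_le hc0 with hcz | hcpos
    · have huz : ∀ i, u i = 0 := fun i => le_antisymm (by rw [← hcz] at hcu; exact hcu i) (hu i)
      have : ∑ i, ∑ j, W i j * (u i * w j) = 0 := by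
        refine Finset.sum_eq_zero fun i _ => Finset.sum_eq_zero fun j _ => ?_
        rw [huz i, zero_mul, mul_zero]
      rw [this]
      exact mul_nonneg hα0 hβ0
    · set a : Fin f → ℝ := fun i => u i / c with ha
      set b : Fin v → ℝ := fun j => w j * c / β with hb
      have hcne : c ≠ 0 := ne_of_gt hcpos
      have hβne : β ≠ 0 := ne_of_gt hβpos
      have hui₀ : u i₀ = c := by rw [hc, hi₀]
      have ha0 : ∀ i, 0 ≤ a i := fun i => div_nonneg (hu i) hc0
      have ha1 : ∀ i, a i ≤ 1 := fun i => (div_le_one hcpos).mpr (hcu i)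
      have hb0 : ∀ j, 0 ≤ b j := fun j => div_nonneg (mul_nonneg (hw j) hc0) hβ0
      have hb1 : ∀ j, b j ≤ 1 := by
        intro j
        have hwc : w j * c ≤ β := by
          calc w j * c = u i₀ * w j := by rw [hui₀]; ring
            _ ≤ β := hub i₀ j
        rw [hb]
        exact (div_le_one hβpos).mpr hwc
      have hab : ∀ i j, a i * b j = (u i * w j) / β := by
        intro i j
        rw [ha, hb]
        field_simp
      have htot : ∑ i, ∑ j, W i j * (u i * w j) = β * ∑ i, ∑ j, W i j * (a i * b j) := by
        rw [Finset.mul_sum]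
        refine Finset.sum_congr rfl fun i _ => ?_
        rw [Finset.mul_sum]
        refine Finset.sum_congr rfl fun j _ => ?_
        rw [hab i j]
        field_simp
      rw [htot]
      have hbox := boxBound W hα a b ha0 ha1 hb0 hb1
      calc β * ∑ i, ∑ j, W i j * (a i * b j) ≤ β * α := mul_le_mul_of_nonneg_left hbox hβ0
        _ = α * β := mul_comm _ _

lemma alpha_nonneg {f v : ℕ} (W : Matrix (Fin f) (Fin v) ℝ) {α : ℝ}
    (hα : IsGreatest {a | ∃ R : Matrix (Fin f) (Fin v) ℝ,
      (∀ i j, R i j = 0 ∨ R i j = 1) ∧ R.rank ≤ 1 ∧ a = frob W R} α) : 0 ≤ α :=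
  hα.2 ⟨0, fun _ _ => Or.inl rfl, by simp [Matrix.rank_zero], by simp [frob]⟩

lemma factorBound {f v : ℕ} (S W : Matrix (Fin f) (Fin v) ℝ) (hS : ∀ i j, 0 ≤ S i j)
    {α : ℝ}
    (hα : IsGreatest {a | ∃ R : Matrix (Fin f) (Fin v) ℝ,
      (∀ i j, R i j = 0 ∨ R i j = 1) ∧ R.rank ≤ 1 ∧ a = frob W R} α)
    {β : ℝ}
    (hβ : IsGreatest {a | ∃ i j, a = |S i j|} β)
    {r : ℕ} (U : Matrix (Fin f) (Fin r) ℝ) (V : Matrix (Fin r) (Fin v) ℝ)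
    (hU : ∀ i l, 0 ≤ U i l) (hV : ∀ l j, 0 ≤ V l j) (hSUV : S = U * V) :
    frob W S ≤ (r : ℝ) * α * β := by
  classical
  obtain ⟨i₀, j₀, hβval⟩ := hβ.1
  have : Nonempty (Fin f) := ⟨i₀⟩
  have : Nonempty (Fin v) := ⟨j₀⟩
  have hβ0 : 0 ≤ β := hβval ▸ abs_nonneg _
  have hα0 : 0 ≤ α := alpha_nonneg W hα
  have hSβ : ∀ i j, S i j ≤ β :=
    fun i j => le_trans (le_abs_self _) (hβ.2 ⟨i, j, rfl⟩)
  have hsplit : frob W S = ∑ l, ∑ i, ∑ j, W i j * (U i l * V l j) := by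
    rw [frob]
    have h1 : ∀ i j, W i j * S i j = ∑ l, W i j * (U i l * V l j) := by
      intro i j
      rw [hSUV, Matrix.mul_apply, Finset.mul_sum]
    calc ∑ i, ∑ j, W i j * S i j
        = ∑ i, ∑ j, ∑ l, W i j * (U i l * V l j) :=
          Finset.sum_congr rfl fun i _ => Finset.sum_congr rfl fun j _ => h1 i j
      _ = ∑ i, ∑ l, ∑ j, W i j * (U i l * V l j) :=
          Finset.sum_congr rfl fun i _ => Finset.sum_comm
      _ = ∑ l, ∑ i, ∑ j, W i j * (U i l * V l j) := Finset.sum_comm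
  rw [hsplit]
  have hterm : ∀ l, ∑ i, ∑ j, W i j * (U i l * V l j) ≤ α * β := by
    intro l
    refine rank1Bound W hα hα0 hβ0 (fun i => U i l) (fun j => V l j)
      (fun i => hU i l) (fun j => hV l j) (fun i j => ?_)
    have h2 : U i l * V l j ≤ S i j := by
      rw [hSUV, Matrix.mul_apply]
      exact Finset.single_le_sum (f := fun l' => U i l' * V l' j)
        (fun l' _ => mul_nonneg (hU i l') (hV l' j)) (Finset.mem_univ l)
    exact le_trans h2 (hSβ i j)
  calc ∑ l, ∑ i, ∑ j, W i j * (U i l * V l j) ≤ ∑ l : Fin r, α * β :=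
        Finset.sum_le_sum fun l _ => hterm l
    _ = (r : ℝ) * (α * β) := by rw [Finset.sum_const, Finset.card_univ, Fintype.card_fin,
        nsmul_eq_mul]
    _ = (r : ℝ) * α * β := by ring

lemma part1 {f v : ℕ} (S W : Matrix (Fin f) (Fin v) ℝ) (hS : ∀ i j, 0 ≤ S i j)
    {α : ℝ}
    (hα : IsGreatest {a | ∃ R : Matrix (Fin f) (Fin v) ℝ,
      (∀ i j, R i j = 0 ∨ R i j = 1) ∧ R.rank ≤ 1 ∧ a = frob W R} α)
    {β : ℝ}
    (hβ : IsGreatest {a | ∃ i j, a = |S i j|} β) :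
    frob W S ≤ (nonnegRank S : ℝ) * α * β := by
  classical
  have hne : {r : ℕ | ∃ (U : Matrix (Fin f) (Fin r) ℝ) (V : Matrix (Fin r) (Fin v) ℝ),
      (∀ i l, 0 ≤ U i l) ∧ (∀ l j, 0 ≤ V l j) ∧ S = U * V}.Nonempty := by
    refine ⟨f, 1, S, fun i l => ?_, hS, (Matrix.one_mul S).symm⟩
    rw [Matrix.one_apply]
    split <;> norm_num
  obtain ⟨U, V, hU, hV, hSUV⟩ := Nat.sInf_mem hne
  exact factorBound S W hS hα hβ U V hU hV hSUV

lemma mulVec_sum_smul {r d v : ℕ} (A : Matrix (Fin r) (Fin d) ℝ) (t : Fin v → ℝ)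
    (y : Fin v → Fin d → ℝ) (l : Fin r) :
    A.mulVec (∑ j, t j • y j) l = ∑ j, t j * A.mulVec (y j) l := by
  simp only [Matrix.mulVec, dotProduct, Finset.sum_apply, Pi.smul_apply,
    smul_eq_mul, Finset.mul_sum]
  rw [Finset.sum_comm]
  exact Finset.sum_congr rfl fun j _ => Finset.sum_congr rfl fun k _ => by ring

lemma part2 {f v n : ℕ} (S W : Matrix (Fin f) (Fin v) ℝ) (hS : ∀ i j, 0 ≤ S i j)
    {α : ℝ}
    (hα : IsGreatest {a | ∃ R : Matrix (Fin f) (Fin v) ℝ,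
      (∀ i j, R i j = 0 ∨ R i j = 1) ∧ R.rank ≤ 1 ∧ a = frob W R} α)
    {β : ℝ}
    (hβ : IsGreatest {a | ∃ i j, a = |S i j|} β)
    (A : Matrix (Fin f) (Fin n) ℝ) (b : Fin f → ℝ)
    (P : Set (Fin n → ℝ)) (x : Fin v → (Fin n → ℝ))
    (hP : P = {z | A.mulVec z ≤ b})
    (hconv : P = convexHull ℝ (Set.range x))
    (hpq : ∃ p ∈ P, ∃ q ∈ P, p ≠ q)
    (hslack : ∀ i j, S i j = b i - A.mulVec (x j) i) :
    frob W S ≤ (xc P : ℝ) * β * α := by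
  classical
  obtain ⟨i₀, j₀, hβval⟩ := hβ.1
  have hβ0 : 0 ≤ β := hβval ▸ abs_nonneg _
  have : Nonempty (Fin v) := ⟨j₀⟩
  have hα0 : 0 ≤ α := alpha_nonneg W hα
  -- the xc defining set is nonempty
  have hxne : {r : ℕ | ∃ (d : ℕ) (A' : Matrix (Fin r) (Fin d) ℝ) (b' : Fin r → ℝ)
      (π : (Fin d → ℝ) →ₗ[ℝ] (Fin n → ℝ)),
      π '' {y | A'.mulVec y ≤ b'} = P}.Nonempty := by
    refine ⟨f, n, A, b, LinearMap.id, ?_⟩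
    rw [hP]
    simp [Set.image_id]
  have hxcmem : xc P ∈ {r : ℕ | ∃ (d : ℕ) (A' : Matrix (Fin r) (Fin d) ℝ) (b' : Fin r → ℝ)
      (π : (Fin d → ℝ) →ₗ[ℝ] (Fin n → ℝ)),
      π '' {y | A'.mulVec y ≤ b'} = P} := Nat.sInf_mem hxne
  obtain ⟨d, A', b', π, hπ⟩ := hxcmem
  -- choose preimages of the points x j
  have hxP : ∀ j, x j ∈ P := by
    intro j
    rw [hconv]
    exact subset_convexHull ℝ _ ⟨j, rfl⟩
  have hyex : ∀ j, ∃ y, A'.mulVec y ≤ b' ∧ π y = x j := by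
    intro j
    have h1 := hxP j
    rw [← hπ] at h1
    obtain ⟨y, hy, hyx⟩ := h1
    exact ⟨y, hy, hyx⟩
  choose y hyQ hyπ using hyex
  -- P is bounded
  set M : ℝ := Finset.univ.sup' (Finset.univ_nonempty (α := Fin v)) (fun j => ‖x j‖) with hMdef
  have hM : ∀ z ∈ P, ‖z‖ ≤ M := by
    have hsub : convexHull ℝ (Set.range x) ⊆ Metric.closedBall 0 M := by
      apply convexHull_min
      · rintro _ ⟨j, rfl⟩
        rw [Metric.mem_closedBall, dist_zero_right]
        exact Finset.le_sup' (fun j => ‖x j‖) (Finset.mem_univ j)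
      · exact convex_closedBall 0 M
    intro z hz
    rw [hconv] at hz
    have := hsub hz
    rwa [Metric.mem_closedBall, dist_zero_right] at this
  -- slack of the extension at the chosen preimages
  set sl : Fin (xc P) → Fin v → ℝ := fun l j => b' l - A'.mulVec (y j) l with hsl
  -- Farkas II: the all-ones vector is a nonnegative combination of extension slacks
  have hones : ∃ c : Fin (xc P) → ℝ, (∀ l, 0 ≤ c l) ∧ ∀ j, (1:ℝ) = ∑ l, c l * sl l j := by
    have hpremise : ∀ t : Fin v → ℝ, (∀ l, 0 ≤ ∑ j, sl l j * t j) →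
        0 ≤ ∑ j, (fun _ => (1:ℝ)) j * t j := by
      intro t ht
      by_contra hneg
      push_neg at hneg
      simp only [one_mul] at hneg
      set τ : ℝ := -(∑ j, t j) with hτ
      have hτpos : 0 < τ := by rw [hτ]; linarith
      have hτinv : 0 < τ⁻¹ := inv_pos.mpr hτpos
      have hττ : τ * τ⁻¹ = 1 := mul_inv_cancel₀ hτpos.ne'
      obtain ⟨ytil, hytil⟩ : ∃ w : Fin d → ℝ, w = (-τ⁻¹) • (∑ j, t j • y j) := ⟨_, rfl⟩
      have hge : ∀ l, b' l ≤ A'.mulVec ytil l := by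
        intro l
        have hlin : A'.mulVec (∑ j, t j • y j) l = ∑ j, t j * A'.mulVec (y j) l :=
          mulVec_sum_smul A' t y l
        have h1 : A'.mulVec ytil l = -τ⁻¹ * ∑ j, t j * A'.mulVec (y j) l := by
          rw [hytil, Matrix.mulVec_smul, Pi.smul_apply, smul_eq_mul, hlin]
        have h2 := ht l
        have h3 : ∑ j, sl l j * t j
            = b' l * (∑ j, t j) - ∑ j, t j * A'.mulVec (y j) l := by
          rw [Finset.mul_sum, ← Finset.sum_sub_distrib]
          exact Finset.sum_congr rfl fun j _ => by rw [hsl]; ring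
        rw [h3] at h2
        -- so  ∑ j, t j * A'.mulVec (y j) l ≤ b' l * (∑ j, t j) = τ * (- b' l)
        have h4 : ∑ j, t j * A'.mulVec (y j) l ≤ τ * (-b' l) := by
          have : b' l * (∑ j, t j) = τ * (-b' l) := by rw [hτ]; ring
          linarith
        have h5 := mul_le_mul_of_nonneg_left h4 hτinv.le
        have h6 : τ⁻¹ * (τ * (-b' l)) = -b' l := by
          rw [← mul_assoc, inv_mul_cancel₀ hτpos.ne', one_mul]
        rw [h6] at h5
        rw [h1]
        linarith
      have hπconst : ∀ z, A'.mulVec z ≤ b' → π z = π ytil := by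
        intro z hzQ
        by_contra hne'
        obtain ⟨uvec, huvec⟩ : ∃ w : Fin n → ℝ, w = π z - π ytil := ⟨_, rfl⟩
        have hu0 : uvec ≠ 0 := by
          intro h0
          exact hne' (by rwa [huvec, sub_eq_zero] at h0)
        have hray : ∀ θ : ℝ, 1 ≤ θ → π ytil + θ • uvec ∈ P := by
          intro θ hθ
          have hmem : A'.mulVec (ytil + θ • (z - ytil)) ≤ b' := by
            intro l
            rw [Matrix.mulVec_add, Matrix.mulVec_smul, Matrix.mulVec_sub]
            simp only [Pi.add_apply, Pi.smul_apply, Pi.sub_apply, smul_eq_mul]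
            have h1 := hge l
            have h2 := hzQ l
            nlinarith [mul_nonneg (by linarith : (0:ℝ) ≤ θ - 1)
                (by linarith : (0:ℝ) ≤ A'.mulVec ytil l - b' l),
              mul_nonneg (by linarith : (0:ℝ) ≤ θ)
                (by linarith : (0:ℝ) ≤ b' l - A'.mulVec z l)]
          have hmem2 : π (ytil + θ • (z - ytil)) ∈ P := by
            rw [← hπ]; exact ⟨_, hmem, rfl⟩
          have heqpt : π (ytil + θ • (z - ytil)) = π ytil + θ • uvec := by
            rw [map_add, map_smul, map_sub, ← huvec]
          rwa [heqpt] at hmem2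
        set θ : ℝ := max 1 ((M + ‖π ytil‖ + 1) / ‖uvec‖) with hθdef
        have hθ1 : 1 ≤ θ := le_max_left _ _
        have h6 := hM _ (hray θ hθ1)
        have hnorm : θ * ‖uvec‖ ≤ M + ‖π ytil‖ := by
          calc θ * ‖uvec‖ = ‖θ • uvec‖ := by
                rw [norm_smul, Real.norm_eq_abs, abs_of_nonneg (by linarith : (0:ℝ) ≤ θ)]
            _ = ‖(π ytil + θ • uvec) - π ytil‖ := by rw [add_sub_cancel_left]
            _ ≤ ‖π ytil + θ • uvec‖ + ‖π ytil‖ := norm_sub_le _ _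
            _ ≤ M + ‖π ytil‖ := by linarith
        have hupos : 0 < ‖uvec‖ := norm_pos_iff.mpr hu0
        have h8 : M + ‖π ytil‖ + 1 ≤ θ * ‖uvec‖ :=
          (div_le_iff₀ hupos).mp (le_max_right _ _)
        linarith
      obtain ⟨p, hp, q, hq, hpqne⟩ := hpq
      rw [← hπ] at hp hq
      obtain ⟨zp, hzp, hzpe⟩ := hp
      obtain ⟨zq, hzq, hzqe⟩ := hq
      exact hpqne (by rw [← hzpe, ← hzqe, hπconst zp hzp, hπconst zq hzq])
    obtain ⟨c, hc, hck⟩ := farkas_cone sl (fun _ => (1:ℝ)) hpremise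
    exact ⟨c, hc, fun j => hck j⟩
  obtain ⟨c, hc0, hcsum⟩ := hones
  -- Farkas I on each facet inequality
  have hrow : ∀ i : Fin f, ∃ lam : Fin (xc P) → ℝ, ∃ μ : ℝ,
      (∀ l, 0 ≤ lam l) ∧ 0 ≤ μ ∧
      ∀ yy, b i - ((LinearMap.proj i).comp ((Matrix.mulVecLin A).comp π)) yy
        = μ + ∑ l, lam l * (b' l - A'.mulVec yy l) := by
    intro i
    apply affine_farkas A' b' (y j₀) (hyQ j₀)
    intro yy hyy
    have hin : π yy ∈ P := by rw [← hπ]; exact ⟨yy, hyy, rfl⟩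
    rw [hP] at hin
    exact hin i
  choose lam μ hlam hμ hfeq using hrow
  set Umat : Matrix (Fin f) (Fin (xc P)) ℝ := Matrix.of (fun i l => lam i l + μ i * c l)
    with hUmat
  set Vmat : Matrix (Fin (xc P)) (Fin v) ℝ := Matrix.of (fun l j => sl l j) with hVmat
  have hUnn : ∀ i l, 0 ≤ Umat i l := fun i l =>
    add_nonneg (hlam i l) (mul_nonneg (hμ i) (hc0 l))
  have hVnn : ∀ l j, 0 ≤ Vmat l j := fun l j => sub_nonneg.mpr (hyQ j l)
  have hfact : S = Umat * Vmat := by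
    ext i j
    rw [Matrix.mul_apply]
    have e1 : ∑ l, Umat i l * Vmat l j
        = (∑ l, lam i l * sl l j) + μ i * ∑ l, c l * sl l j := by
      rw [Finset.mul_sum, ← Finset.sum_add_distrib]
      exact Finset.sum_congr rfl fun l _ => by
        simp only [hUmat, hVmat, Matrix.of_apply]; ring
    have e2 := hfeq i (y j)
    have e3 : ((LinearMap.proj i).comp ((Matrix.mulVecLin A).comp π)) (y j)
        = A.mulVec (x j) i := by
      simp [hyπ j]
    rw [e3] at e2
    have e4 : S i j = μ i + ∑ l, lam i l * sl l j := by
      rw [hslack i j, e2]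
    rw [e1, ← hcsum j, mul_one, e4]
    ring
  have hle : nonnegRank S ≤ xc P := Nat.sInf_le ⟨Umat, Vmat, hUnn, hVnn, hfact⟩
  have hcast : (nonnegRank S : ℝ) ≤ (xc P : ℝ) := Nat.cast_le.mpr hle
  calc frob W S ≤ (nonnegRank S : ℝ) * α * β := part1 S W hS hα hβ
    _ ≤ (xc P : ℝ) * α * β :=
        mul_le_mul_of_nonneg_right (mul_le_mul_of_nonneg_right hcast hα0) hβ0
    _ = (xc P : ℝ) * β * α := by ring

end Aux

/-- **Hyperplane separation lower bound**: for a nonnegative matrix `S`, any matrix `W`, with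
`α` the maximum of `⟨W, R⟩` over 0/1 matrices `R` of rank at most one and `β = ‖S‖_∞` the largest
absolute value of an entry of `S`, one has `⟨W, S⟩ ≤ rk₊(S)·α·β`.  In particular, if `S` is the
slack matrix of a polytope `P` of dimension at least one, then `⟨W, S⟩ ≤ xc(P)·β·α`. -/
theorem hyperplane_separation_lower_bound (f v : ℕ)
    (S W : Matrix (Fin f) (Fin v) ℝ) (hS : ∀ i j, 0 ≤ S i j)
    (α : ℝ)
    (hα : IsGreatest {a | ∃ R : Matrix (Fin f) (Fin v) ℝ,
      (∀ i j, R i j = 0 ∨ R i j = 1) ∧ R.rank ≤ 1 ∧ a = frob W R} α)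
    (β : ℝ)
    (hβ : IsGreatest {a | ∃ i j, a = |S i j|} β) :
    frob W S ≤ (nonnegRank S : ℝ) * α * β ∧
    ∀ (n : ℕ) (A : Matrix (Fin f) (Fin n) ℝ) (b : Fin f → ℝ)
      (P : Set (Fin n → ℝ)) (x : Fin v → (Fin n → ℝ)),
      P = {z | A.mulVec z ≤ b} →
      Set.range x = Set.extremePoints ℝ P →
      P = convexHull ℝ (Set.range x) →
      (∃ p ∈ P, ∃ q ∈ P, p ≠ q) →
      (∀ i j, S i j = b i - A.mulVec (x j) i) →
      frob W S ≤ (xc P : ℝ) * β * α := by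
  constructor
  · exact part1 S W hS hα hβ
  · intro n A b P x hP hx hconv hpq hslack
    exact part2 S W hS hα hβ A b P x hP hconv hpq hslack
end

section
/- Let K_n = (V,E) be the complete graph on an even number n of nodes and let S be the matrix indexed by odd-size subsets U ⊆ V and perfect matchings M ⊆ E with entries S_{U,M} = |M ∩ δ(U)| − 1. For non-adjacent edges e_1, e_2 ∈ E let 𝓤_{e_1,e_2} := {U : |U| odd, e_1,e_2 ∈ δ(U)} and 𝓜_{e_1,e_2} := {M perfect matching : e_1,e_2 ∈ M}. Then supp(S) = {(U,M) : S_{U,M} > 0} equals the union of the rectangles 𝓤_{e_1,e_2} × 𝓜_{e_1,e_2} over all pairs of non-adjacent edges; moreover, every entry (U,M) with S_{U,M} = k lies in exactly C(k+1, 2) of these rectangles. -/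
/-- The cut `δ(U)`: all edges of the complete graph with exactly one endpoint in `U`. -/
def cutSet {n : ℕ} (U : Set (Fin n)) : Set (Sym2 (Fin n)) :=
  {e | ∃ a b : Fin n, e = s(a, b) ∧ a ∈ U ∧ b ∉ U}

/-- `M` is a matching: a set of non-loop edges that are pairwise vertex disjoint. -/
def IsMatching {n : ℕ} (M : Finset (Sym2 (Fin n))) : Prop :=
  (∀ e ∈ M, ¬ e.IsDiag) ∧
  (∀ e ∈ M, ∀ f ∈ M, e ≠ f → ∀ v : Fin n, v ∈ e → v ∉ f)

/-- `M` is a perfect matching of the complete graph on `n` nodes. -/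
def IsPM {n : ℕ} (M : Finset (Sym2 (Fin n))) : Prop :=
  IsMatching M ∧ ∀ v : Fin n, ∃ e ∈ M, v ∈ e

/-- Two edges are non-adjacent if they share no endpoint. -/
def NonAdj {n : ℕ} (e₁ e₂ : Sym2 (Fin n)) : Prop :=
  ∀ v : Fin n, v ∈ e₁ → v ∉ e₂

/-- For the slack matrix `S_{U,M} = |M ∩ δ(U)| − 1` of the odd-set inequalities of the perfect
matching polytope of the complete graph on an even number `n` of nodes: an entry is positive iff
it is covered by one of the rectangles `𝓤_{e₁,e₂} × 𝓜_{e₁,e₂}` indexed by (unordered) pairs of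
non-adjacent edges; moreover an entry with `S_{U,M} = k` (i.e. `|M ∩ δ(U)| = k + 1`) is covered
by exactly `C(k+1,2)` of these rectangles. -/
theorem slack_support_rectangle_cover (n : ℕ) (hn : Even n)
    (U : Finset (Fin n)) (M : Finset (Sym2 (Fin n)))
    (hU : Odd U.card) (hM : IsPM M) :
    ((0 < ((((M : Set (Sym2 (Fin n))) ∩ cutSet (U : Set (Fin n))).ncard : ℤ) - 1)) ↔
      ∃ e₁ e₂ : Sym2 (Fin n), ¬ e₁.IsDiag ∧ ¬ e₂.IsDiag ∧ NonAdj e₁ e₂ ∧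
        e₁ ∈ M ∧ e₂ ∈ M ∧ e₁ ∈ cutSet (U : Set (Fin n)) ∧ e₂ ∈ cutSet (U : Set (Fin n))) ∧
    (∀ k : ℕ, ((M : Set (Sym2 (Fin n))) ∩ cutSet (U : Set (Fin n))).ncard = k + 1 →
      {p : Finset (Sym2 (Fin n)) | ∃ e₁ e₂ : Sym2 (Fin n),
          ¬ e₁.IsDiag ∧ ¬ e₂.IsDiag ∧ NonAdj e₁ e₂ ∧ p = {e₁, e₂} ∧
          e₁ ∈ M ∧ e₂ ∈ M ∧
          e₁ ∈ cutSet (U : Set (Fin n)) ∧ e₂ ∈ cutSet (U : Set (Fin n))}.ncard =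
        (k + 1).choose 2) := by
  classical
  set T : Finset (Sym2 (Fin n)) := M.filter (fun e => e ∈ cutSet (U : Set (Fin n))) with hT
  have hmemT : ∀ e, e ∈ T ↔ e ∈ M ∧ e ∈ cutSet (U : Set (Fin n)) := by
    intro e; simp [hT]
  have hTset : (M : Set (Sym2 (Fin n))) ∩ cutSet (U : Set (Fin n)) = ↑T := by
    ext e; simp [hmemT e, Set.mem_inter_iff]
  have hcard : ((M : Set (Sym2 (Fin n))) ∩ cutSet (U : Set (Fin n))).ncard = T.card := by
    rw [hTset, Set.ncard_coe_finset]
  have hne : ∀ e₁ e₂ : Sym2 (Fin n), NonAdj e₁ e₂ → e₁ ≠ e₂ := by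
    intro e₁ e₂ hna heq
    induction e₁ using Sym2.ind with
    | _ a b =>
      exact hna a (Sym2.mem_mk_left a b) (heq ▸ Sym2.mem_mk_left a b)
  constructor
  · rw [hcard]
    constructor
    · intro h
      have h2 : 1 < T.card := by omega
      obtain ⟨e₁, h₁, e₂, h₂, hne12⟩ := Finset.one_lt_card.mp h2
      obtain ⟨hm₁, hc₁⟩ := (hmemT e₁).mp h₁
      obtain ⟨hm₂, hc₂⟩ := (hmemT e₂).mp h₂
      exact ⟨e₁, e₂, hM.1.1 e₁ hm₁, hM.1.1 e₂ hm₂,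
        hM.1.2 e₁ hm₁ e₂ hm₂ hne12, hm₁, hm₂, hc₁, hc₂⟩
    · rintro ⟨e₁, e₂, hd₁, hd₂, hna, hm₁, hm₂, hc₁, hc₂⟩
      have h2 : 1 < T.card :=
        Finset.one_lt_card.mpr ⟨e₁, (hmemT e₁).mpr ⟨hm₁, hc₁⟩,
          e₂, (hmemT e₂).mpr ⟨hm₂, hc₂⟩, hne e₁ e₂ hna⟩
      omega
  · intro k hk
    rw [hcard] at hk
    have hSet : {p : Finset (Sym2 (Fin n)) | ∃ e₁ e₂ : Sym2 (Fin n),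
          ¬ e₁.IsDiag ∧ ¬ e₂.IsDiag ∧ NonAdj e₁ e₂ ∧ p = {e₁, e₂} ∧
          e₁ ∈ M ∧ e₂ ∈ M ∧
          e₁ ∈ cutSet (U : Set (Fin n)) ∧ e₂ ∈ cutSet (U : Set (Fin n))}
        = ↑(T.powersetCard 2) := by
      ext p
      simp only [Set.mem_setOf_eq, Finset.mem_coe, Finset.mem_powersetCard]
      constructor
      · rintro ⟨e₁, e₂, hd₁, hd₂, hna, rfl, hm₁, hm₂, hc₁, hc₂⟩
        have hne12 : e₁ ≠ e₂ := hne e₁ e₂ hna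
        constructor
        · intro x hx
          rcases Finset.mem_insert.mp hx with h | h
          · exact h ▸ (hmemT e₁).mpr ⟨hm₁, hc₁⟩
          · exact (Finset.mem_singleton.mp h) ▸ (hmemT e₂).mpr ⟨hm₂, hc₂⟩
        · exact Finset.card_pair hne12
      · rintro ⟨hsub, hcard2⟩
        obtain ⟨e₁, e₂, hne12, rfl⟩ := Finset.card_eq_two.mp hcard2
        have h₁ := hsub (Finset.mem_insert_self e₁ {e₂})
        have h₂ := hsub (Finset.mem_insert_of_mem (Finset.mem_singleton_self e₂))
        obtain ⟨hm₁, hc₁⟩ := (hmemT e₁).mp h₁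
        obtain ⟨hm₂, hc₂⟩ := (hmemT e₂).mp h₂
        exact ⟨e₁, e₂, hM.1.1 e₁ hm₁, hM.1.1 e₂ hm₂,
          hM.1.2 e₁ hm₁ e₂ hm₂ hne12, rfl, hm₁, hm₂, hc₁, hc₂⟩
    rw [hSet, Set.ncard_coe_finset, Finset.card_powersetCard, hk]
end

section
/- Let ε > 0, let T be a partition, and let H ⊆ C × D be a 3-matching. If (T,H) is M-good, then (1/(1+ε))·p_{M,T}(H) ≤ p^ex_{M,T}(H) ≤ (1+ε)·p_{M,T}(H). -/
open scoped Classical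

namespace MatchingLB

/-- Edges of the complete graph on `n` nodes. -/
abbrev Edge (n : ℕ) := Sym2 (Fin n)

/-- Number of nodes: `n = 3m(k−3) + 2k`. -/
def npar (k m : ℕ) : ℕ := 3 * m * (k - 3) + 2 * k

/-- Cut size: `t = ((m+1)/2)·(k−3) + 3`. -/
def tpar (k m : ℕ) : ℕ := (m + 1) / 2 * (k - 3) + 3

/-- The cut `δ(U)`: all edges with exactly one endpoint in `U`. -/
def cutSet {n : ℕ} (U : Set (Fin n)) : Set (Edge n) :=
  {e | ∃ a b : Fin n, e = s(a, b) ∧ a ∈ U ∧ b ∉ U}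

/-- A matching: a set of non-loop edges that are pairwise vertex disjoint. -/
def IsMatching {n : ℕ} (M : Finset (Edge n)) : Prop :=
  (∀ e ∈ M, ¬ e.IsDiag) ∧
  (∀ e ∈ M, ∀ f ∈ M, e ≠ f → ∀ v : Fin n, v ∈ e → v ∉ f)

/-- A perfect matching of the complete graph on `n` nodes. -/
def IsPM {n : ℕ} (M : Finset (Edge n)) : Prop :=
  IsMatching M ∧ ∀ v : Fin n, ∃ e ∈ M, v ∈ e

/-- `Q_ℓ`: pairs `(U, M)` of a `t`-node cut and a perfect matching with `|δ(U) ∩ M| = ℓ`. -/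
def Qset (n t ℓ : ℕ) : Set (Finset (Fin n) × Finset (Edge n)) :=
  {p | p.1.card = t ∧ IsPM p.2 ∧
    ((p.2 : Set (Edge n)) ∩ cutSet (p.1 : Set (Fin n))).ncard = ℓ}

/-- The uniform measure `μ_ℓ(𝓡) = |𝓡 ∩ Q_ℓ| / |Q_ℓ|` of a set of pairs on `Q_ℓ`. -/
noncomputable def mu (n t ℓ : ℕ) (R : Set (Finset (Fin n) × Finset (Edge n))) : ℝ :=
  ((R ∩ Qset n t ℓ).ncard : ℝ) / ((Qset n t ℓ).ncard : ℝ)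

/-- Labels of the blocks of a partition `T = (A₁,…,A_m, C, D, B₁,…,B_m)`. -/
inductive Lbl (m : ℕ) where
  | A (i : Fin m)
  | C
  | D
  | B (i : Fin m)
  deriving DecidableEq, Fintype

/-- A partition of the `n` nodes into blocks `A₁,…,A_m` of `k−3` nodes each, core sets `C` and
`D` of `k` nodes each, and blocks `B₁,…,B_m` of `2(k−3)` nodes each, encoded as a labelling. -/
def IsPartition (n k m : ℕ) (f : Fin n → Lbl m) : Prop :=
  (∀ i, {v | f v = Lbl.A i}.ncard = k - 3) ∧
  ({v | f v = Lbl.C}.ncard = k) ∧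
  ({v | f v = Lbl.D}.ncard = k) ∧
  (∀ i, {v | f v = Lbl.B i}.ncard = 2 * (k - 3))

def Cset {n m : ℕ} (f : Fin n → Lbl m) : Set (Fin n) := {v | f v = Lbl.C}

def Aset {n m : ℕ} (f : Fin n → Lbl m) (i : Fin m) : Set (Fin n) := {v | f v = Lbl.A i}

/-- A node lies in `C ∪ D`. -/
def inCD {n m : ℕ} (f : Fin n → Lbl m) (v : Fin n) : Prop := f v = Lbl.C ∨ f v = Lbl.D

/-- `e ∈ E(T)`: the edge runs inside some `A_i`, inside `C ∪ D`, or inside some `B_i`. -/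
def allowedEdge {n m : ℕ} (f : Fin n → Lbl m) (e : Edge n) : Prop :=
  ∃ a b : Fin n, e = s(a, b) ∧
    ((∃ i, f a = Lbl.A i ∧ f b = Lbl.A i) ∨ (inCD f a ∧ inCD f b) ∨
      (∃ i, f a = Lbl.B i ∧ f b = Lbl.B i))

/-- `e ∈ C × D`: the edge runs between `C` and `D`. -/
def betweenCD {n m : ℕ} (f : Fin n → Lbl m) (e : Edge n) : Prop :=
  ∃ a b : Fin n, e = s(a, b) ∧ f a = Lbl.C ∧ f b = Lbl.D

/-- `e ∈ E(C ∪ D)`: the edge runs inside `C ∪ D`. -/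
def insideCD {n m : ℕ} (f : Fin n → Lbl m) (e : Edge n) : Prop :=
  ∃ a b : Fin n, e = s(a, b) ∧ inCD f a ∧ inCD f b

/-- `𝓜_all(T)`: the perfect matchings respecting the partition. -/
def MallT {n m : ℕ} (f : Fin n → Lbl m) : Set (Finset (Edge n)) :=
  {M | IsPM M ∧ ∀ e ∈ M, allowedEdge f e}

/-- `𝓤_all(T)`: the `t`-node cuts `U ⊆ A ∪ C` containing all or none of the nodes of each
block `A_i`. -/
def UallT {n m : ℕ} (t : ℕ) (f : Fin n → Lbl m) : Set (Finset (Fin n)) :=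
  {U | U.card = t ∧ (∀ v ∈ U, (∃ i, f v = Lbl.A i) ∨ f v = Lbl.C) ∧
    ∀ i, Disjoint (U : Set (Fin n)) (Aset f i) ∨ Aset f i ⊆ (U : Set (Fin n))}

/-- `V(H)`: the nodes incident to the edges of `H`. -/
def VSet {n : ℕ} (H : Finset (Edge n)) : Set (Fin n) := {v | ∃ e ∈ H, v ∈ e}

/-- `p_{M,T}(H)`: the probability that a uniformly random `M ∈ 𝓜_all(T)` with `H ⊆ M`
lies in `𝓜`. -/
noncomputable def pM {n m : ℕ} (f : Fin n → Lbl m) (Mm : Set (Finset (Edge n)))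
    (H : Finset (Edge n)) : ℝ :=
  ({M | M ∈ MallT f ∧ H ⊆ M ∧ M ∈ Mm}.ncard : ℝ) /
    ({M | M ∈ MallT f ∧ H ⊆ M}.ncard : ℝ)

/-- `p^ex_{M,T}(H)`: the probability that a uniformly random `M ∈ 𝓜_all(T)` with
`M ∩ δ(C) = H` lies in `𝓜`. -/
noncomputable def pMex {n m : ℕ} (f : Fin n → Lbl m) (Mm : Set (Finset (Edge n)))
    (H : Finset (Edge n)) : ℝ :=
  ({M | M ∈ MallT f ∧ M.filter (· ∈ cutSet (Cset f)) = H ∧ M ∈ Mm}.ncard : ℝ) /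
    ({M | M ∈ MallT f ∧ M.filter (· ∈ cutSet (Cset f)) = H}.ncard : ℝ)

/-- `p_{U,T}(c)`: the probability that a uniformly random `U ∈ 𝓤_all(T)` with `c ⊆ U`
lies in `𝓤`. -/
noncomputable def pU {n m : ℕ} (t : ℕ) (f : Fin n → Lbl m) (Uu : Set (Finset (Fin n)))
    (c : Set (Fin n)) : ℝ :=
  ({U | U ∈ UallT t f ∧ c ⊆ (U : Set (Fin n)) ∧ U ∈ Uu}.ncard : ℝ) /
    ({U | U ∈ UallT t f ∧ c ⊆ (U : Set (Fin n))}.ncard : ℝ)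

/-- `p^ex_{U,T}(c)`: the probability that a uniformly random `U ∈ 𝓤_all(T)` with `U ∩ C = c`
lies in `𝓤`. -/
noncomputable def pUexSet {n m : ℕ} (t : ℕ) (f : Fin n → Lbl m) (Uu : Set (Finset (Fin n)))
    (c : Set (Fin n)) : ℝ :=
  ({U | U ∈ UallT t f ∧ (U : Set (Fin n)) ∩ Cset f = c ∧ U ∈ Uu}.ncard : ℝ) /
    ({U | U ∈ UallT t f ∧ (U : Set (Fin n)) ∩ Cset f = c}.ncard : ℝ)

/-- `p^ex_{U,T}(H) := p^ex_{U,T}(V(H) ∩ C)` for a matching `H ⊆ C × D`. -/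
noncomputable def pUexH {n m : ℕ} (t : ℕ) (f : Fin n → Lbl m) (Uu : Set (Finset (Fin n)))
    (H : Finset (Edge n)) : ℝ :=
  pUexSet t f Uu (VSet H ∩ Cset f)

/-- `H` is an `ℓ`-matching in the complete bipartite graph between `C` and `D`. -/
def IsCDMatching {n m : ℕ} (f : Fin n → Lbl m) (ℓ : ℕ) (H : Finset (Edge n)) : Prop :=
  IsMatching H ∧ H.card = ℓ ∧ ∀ e ∈ H, betweenCD f e

/-- `(T,H)` is `M`-good: `0 < (1/(1+ε))·p_{M,T}(H)` and every `k`-matching `F` with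
`H ⊆ F ⊆ E(C ∪ D)` satisfies `(1/(1+ε))·p_{M,T}(H) ≤ p_{M,T}(F) ≤ (1+ε)·p_{M,T}(H)`. -/
def MGood {n m : ℕ} (ε : ℝ) (k : ℕ) (f : Fin n → Lbl m) (Mm : Set (Finset (Edge n)))
    (H : Finset (Edge n)) : Prop :=
  0 < (1 / (1 + ε)) * pM f Mm H ∧
  ∀ F : Finset (Edge n), IsMatching F → F.card = k → H ⊆ F → (∀ e ∈ F, insideCD f e) →
    (1 / (1 + ε)) * pM f Mm H ≤ pM f Mm F ∧ pM f Mm F ≤ (1 + ε) * pM f Mm H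

/-- `(T,H)` is `U`-good:
`0 < (1/(1+ε))·p^ex_{U,T}(H) ≤ p^ex_{U,T}(C) ≤ (1+ε)·p^ex_{U,T}(H)`. -/
def UGood {n m : ℕ} (ε : ℝ) (t : ℕ) (f : Fin n → Lbl m) (Uu : Set (Finset (Fin n)))
    (H : Finset (Edge n)) : Prop :=
  0 < (1 / (1 + ε)) * pUexH t f Uu H ∧
  (1 / (1 + ε)) * pUexH t f Uu H ≤ pUexSet t f Uu (Cset f) ∧
  pUexSet t f Uu (Cset f) ≤ (1 + ε) * pUexH t f Uu H

/-- `(T,H)` is good: both `M`-good and `U`-good. -/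
def Good {n m : ℕ} (ε : ℝ) (k t : ℕ) (f : Fin n → Lbl m)
    (Mm : Set (Finset (Edge n))) (Uu : Set (Finset (Fin n))) (H : Finset (Edge n)) : Prop :=
  MGood ε k f Mm H ∧ UGood ε t f Uu H

/-- `(T,H)` is small: `p^ex_{M,T}(H) ≤ 2^{−δm}` or `p^ex_{U,T}(H) ≤ 2^{−δm}`. -/
def Small {n m : ℕ} (δ : ℝ) (t : ℕ) (f : Fin n → Lbl m)
    (Mm : Set (Finset (Edge n))) (Uu : Set (Finset (Fin n))) (H : Finset (Edge n)) : Prop :=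
  pMex f Mm H ≤ (2 : ℝ) ^ (-(δ * (m : ℝ))) ∨ pUexH t f Uu H ≤ (2 : ℝ) ^ (-(δ * (m : ℝ)))

/-- `(T,H)` is bad: neither good nor small. -/
def Bad {n m : ℕ} (ε δ : ℝ) (k t : ℕ) (f : Fin n → Lbl m)
    (Mm : Set (Finset (Edge n))) (Uu : Set (Finset (Fin n))) (H : Finset (Edge n)) : Prop :=
  ¬ Good ε k t f Mm Uu H ∧ ¬ Small δ t f Mm Uu H

/-- `(T,H)` is `U`-bad: neither `U`-good nor small. -/
def UBad {n m : ℕ} (ε δ : ℝ) (t : ℕ) (f : Fin n → Lbl m)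
    (Mm : Set (Finset (Edge n))) (Uu : Set (Finset (Fin n))) (H : Finset (Edge n)) : Prop :=
  ¬ UGood ε t f Uu H ∧ ¬ Small δ t f Mm Uu H

/-- `𝒫(U,M)`: the partitions `T` compatible with the pair `(U, M)`, i.e. `U ∈ 𝓤_all(T)` with
`U ∩ C = V(H) ∩ C` and `M ∈ 𝓜_all(T)` with `M ∩ (C × D) = H`, where `H = δ(U) ∩ M`. -/
def PSet (n k m t : ℕ) (U : Finset (Fin n)) (M H : Finset (Edge n)) :
    Set (Fin n → Lbl m) :=
  {f | IsPartition n k m f ∧ U ∈ UallT t f ∧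
    (U : Set (Fin n)) ∩ Cset f = VSet H ∩ Cset f ∧
    M ∈ MallT f ∧ M.filter (betweenCD f) = H}

/-- Expectation of `g` over a uniformly random partition `T`. -/
noncomputable def expPart (n k m : ℕ) (g : (Fin n → Lbl m) → ℝ) : ℝ :=
  (∑ f ∈ Finset.univ.filter (fun f => IsPartition n k m f), g f) /
    ((Finset.univ.filter (fun f => IsPartition n k m f)).card : ℝ)

/-- Expectation of `g` over a uniformly random 3-matching `H` in the complete bipartite graph
between `C` and `D`. -/
noncomputable def expH3 {n m : ℕ} (f : Fin n → Lbl m) (g : Finset (Edge n) → ℝ) : ℝ :=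
  (∑ H ∈ Finset.univ.filter (fun H => IsCDMatching f 3 H), g H) /
    ((Finset.univ.filter (fun H => IsCDMatching f 3 H)).card : ℝ)

section Aux

open Finset

variable {n m k : ℕ}

/-! ### Basic edge predicates -/

lemma mem_cut_pair {U : Set (Fin n)} {x y : Fin n} :
    s(x, y) ∈ cutSet U ↔ (x ∈ U ∧ y ∉ U) ∨ (y ∈ U ∧ x ∉ U) := by
  constructor
  · rintro ⟨a, b, he, ha, hb⟩
    rw [Sym2.eq_iff] at he
    rcases he with ⟨rfl, rfl⟩ | ⟨rfl, rfl⟩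
    · exact Or.inl ⟨ha, hb⟩
    · exact Or.inr ⟨ha, hb⟩
  · rintro (⟨hx, hy⟩ | ⟨hy, hx⟩)
    · exact ⟨x, y, rfl, hx, hy⟩
    · exact ⟨y, x, Sym2.eq_swap.symm, hy, hx⟩

lemma inside_pair {f : Fin n → Lbl m} {x y : Fin n} (hx : inCD f x) (hy : inCD f y) :
    insideCD f s(x, y) := ⟨x, y, rfl, hx, hy⟩

lemma cut_of_between {f : Fin n → Lbl m} {e : Edge n} (h : betweenCD f e) :
    e ∈ cutSet (Cset f) := by
  obtain ⟨a, b, rfl, ha, hb⟩ := h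
  exact ⟨a, b, rfl, ha, by simp [Cset, hb]⟩

lemma inside_of_mem_inCD {f : Fin n → Lbl m} {M : Finset (Edge n)} (hM : M ∈ MallT f)
    {e : Edge n} {v : Fin n} (heM : e ∈ M) (hv : v ∈ e) (hvCD : inCD f v) :
    insideCD f e := by
  obtain ⟨x, y, rfl, hcase⟩ := hM.2 e heM
  rw [Sym2.mem_iff] at hv
  rcases hcase with ⟨i, hx, hy⟩ | h | ⟨i, hx, hy⟩
  · exfalso; rcases hv with rfl | rfl <;> rcases hvCD with h' | h' <;> simp_all
  · exact ⟨x, y, rfl, h.1, h.2⟩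
  · exfalso; rcases hv with rfl | rfl <;> rcases hvCD with h' | h' <;> simp_all

lemma label_cut {f : Fin n → Lbl m} {M : Finset (Edge n)} (hM : M ∈ MallT f)
    {e : Edge n} (heM : e ∈ M) (hc : e ∈ cutSet (Cset f)) :
    ∃ a b, e = s(a, b) ∧ f a = Lbl.C ∧ f b = Lbl.D := by
  obtain ⟨a, b, rfl, ha, hb⟩ := hc
  have ha' : f a = Lbl.C := ha
  have hb' : f b ≠ Lbl.C := hb
  have hin : insideCD f s(a, b) :=
    inside_of_mem_inCD hM heM (by simp) (Or.inl ha')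
  obtain ⟨x, y, hxy, hx, hy⟩ := hin
  rw [Sym2.eq_iff] at hxy
  have hbCD : inCD f b := by rcases hxy with ⟨rfl, rfl⟩ | ⟨rfl, rfl⟩ <;> [exact hy; exact hx]
  rcases hbCD with h | h
  · exact absurd h hb'
  · exact ⟨a, b, rfl, ha', h⟩

lemma inside_of_cut {f : Fin n → Lbl m} {M : Finset (Edge n)} (hM : M ∈ MallT f)
    {e : Edge n} (heM : e ∈ M) (hc : e ∈ cutSet (Cset f)) : insideCD f e := by
  obtain ⟨a, b, rfl, ha, hb⟩ := label_cut hM heM hc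
  exact inside_pair (Or.inl ha) (Or.inr hb)

end Aux
section Aux2

open Finset

variable {n m k : ℕ}

lemma matching_subset {M F : Finset (Edge n)} (hm : IsMatching M) (h : F ⊆ M) :
    IsMatching F :=
  ⟨fun e he => hm.1 e (h he), fun e he g hg hne v hv => hm.2 e (h he) g (h hg) hne v hv⟩

/-- The endpoints of an edge, as a Finset. -/
noncomputable def eFin (e : Edge n) : Finset (Fin n) := Finset.univ.filter (· ∈ e)

lemma mem_eFin {v : Fin n} {e : Edge n} : v ∈ eFin e ↔ v ∈ e := by simp [eFin]

lemma eFin_pair (x y : Fin n) : eFin s(x, y) = {x, y} := by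
  ext v; simp [eFin, Sym2.mem_iff]

lemma card_eFin {e : Edge n} (he : ¬ e.IsDiag) : (eFin e).card = 2 := by
  induction e using Sym2.ind with
  | _ x y =>
    rw [Sym2.mk_isDiag_iff] at he
    rw [eFin_pair, Finset.card_pair he]

lemma eFin_disjoint {M : Finset (Edge n)} (hm : IsMatching M) {e e' : Edge n}
    (he : e ∈ M) (he' : e' ∈ M) (hne : e ≠ e') : Disjoint (eFin e) (eFin e') :=
  Finset.disjoint_left.mpr fun v hv hv' =>
    hm.2 e he e' he' hne v (mem_eFin.mp hv) (mem_eFin.mp hv')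

lemma card_biUnion_eFin {F : Finset (Edge n)} (hm : IsMatching F) :
    (F.biUnion eFin).card = 2 * F.card := by
  rw [Finset.card_biUnion (fun e he e' he' hne => eFin_disjoint hm he he' hne)]
  rw [Finset.sum_congr rfl (fun e he => card_eFin (hm.1 e he))]
  simp [mul_comm]

/-- The vertices labelled `C`, as a Finset. -/
noncomputable def Cfin (f : Fin n → Lbl m) : Finset (Fin n) :=
  Finset.univ.filter (fun v => f v = Lbl.C)

/-- The vertices in `C ∪ D`, as a Finset. -/
noncomputable def CDfin (f : Fin n → Lbl m) : Finset (Fin n) :=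
  Finset.univ.filter (fun v => inCD f v)

lemma card_Cfin {f : Fin n → Lbl m} (hf : IsPartition n k m f) : (Cfin f).card = k := by
  have : {v | f v = Lbl.C} = ↑(Cfin f) := by ext v; simp [Cfin]
  have h := hf.2.1
  rwa [this, Set.ncard_coe_finset] at h

lemma card_CDfin {f : Fin n → Lbl m} (hf : IsPartition n k m f) : (CDfin f).card = 2 * k := by
  have hCD : CDfin f = Cfin f ∪ Finset.univ.filter (fun v => f v = Lbl.D) := by
    ext v; simp only [CDfin, Cfin, Finset.mem_union, Finset.mem_filter, Finset.mem_univ, true_and]; rfl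
  have hD : (Finset.univ.filter (fun v => f v = Lbl.D)).card = k := by
    have : {v | f v = Lbl.D} = ↑(Finset.univ.filter (fun v  => f v = Lbl.D)) := by ext v; simp
    have h := hf.2.2.1
    rwa [this, Set.ncard_coe_finset] at h
  have hdisj : Disjoint (Cfin f) (Finset.univ.filter (fun v => f v = Lbl.D)) := by
    rw [Finset.disjoint_left]
    intro v hv hv'
    simp [Cfin] at hv; simp at hv'
    rw [hv] at hv'; cases hv'
  rw [hCD, Finset.card_union_of_disjoint hdisj, card_Cfin hf, hD, two_mul]

lemma biUnion_subset_CDfin {f : Fin n → Lbl m} {F : Finset (Edge n)}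
    (hin : ∀ e ∈ F, insideCD f e) : F.biUnion eFin ⊆ CDfin f := by
  intro v hv
  obtain ⟨e, he, hve⟩ := Finset.mem_biUnion.mp hv
  obtain ⟨x, y, rfl, hx, hy⟩ := hin e he
  rw [mem_eFin, Sym2.mem_iff] at hve
  rcases hve with rfl | rfl <;> simp [CDfin] <;> [exact hx; exact hy]

lemma card_eq_of_cover {f : Fin n → Lbl m} (hf : IsPartition n k m f) {F : Finset (Edge n)}
    (hFm : IsMatching F) (hin : ∀ e ∈ F, insideCD f e)
    (hcov : ∀ v, inCD f v → ∃ e ∈ F, v ∈ e) : F.card = k := by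
  have hB : F.biUnion eFin = CDfin f := by
    apply Finset.Subset.antisymm (biUnion_subset_CDfin hin)
    intro v hv
    simp only [CDfin, Finset.mem_filter, Finset.mem_univ, true_and] at hv
    obtain ⟨e, he, hve⟩ := hcov v hv
    exact Finset.mem_biUnion.mpr ⟨e, he, mem_eFin.mpr hve⟩
  have := card_biUnion_eFin hFm
  rw [hB, card_CDfin hf] at this
  omega

lemma cover_of_card {f : Fin n → Lbl m} (hf : IsPartition n k m f) {F : Finset (Edge n)}
    (hFm : IsMatching F) (hin : ∀ e ∈ F, insideCD f e) (hcard : F.card = k) :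
    ∀ v, inCD f v → ∃ e ∈ F, v ∈ e := by
  have hB : F.biUnion eFin = CDfin f := by
    apply Finset.eq_of_subset_of_card_le (biUnion_subset_CDfin hin)
    rw [card_CDfin hf, card_biUnion_eFin hFm, hcard]
  intro v hv
  have : v ∈ F.biUnion eFin := by
    rw [hB]; simp [CDfin, hv]
  obtain ⟨e, he, hve⟩ := Finset.mem_biUnion.mp this
  exact ⟨e, he, mem_eFin.mp hve⟩

end Aux2
section Aux3

open Finset

variable {n m k : ℕ}

lemma filter_inside_eq {f : Fin n → Lbl m} (hf : IsPartition n k m f)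
    {M F : Finset (Edge n)} (hM : M ∈ MallT f) (hFm : IsMatching F) (hFk : F.card = k)
    (hin : ∀ e ∈ F, insideCD f e) (hsub : F ⊆ M) :
    M.filter (fun e => insideCD f e) = F := by
  apply Finset.Subset.antisymm
  · intro e he
    rw [Finset.mem_filter] at he
    obtain ⟨heM, hein⟩ := he
    by_contra heF
    obtain ⟨x, y, rfl, hx, hy⟩ := hein
    obtain ⟨e', he'F, hxe'⟩ := cover_of_card hf hFm hin hFk x hx
    have he'M : e' ∈ M := hsub he'F
    have hne : s(x, y) ≠ e' := fun h => heF (h ▸ he'F)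
    exact hM.1.1.2 s(x, y) heM e' he'M hne x (by simp) hxe'
  · intro e he
    exact Finset.mem_filter.mpr ⟨hsub he, hin e he⟩

lemma restrict_cover {f : Fin n → Lbl m} {M : Finset (Edge n)} (hM : M ∈ MallT f) :
    ∀ v, inCD f v → ∃ e ∈ M.filter (fun e => insideCD f e), v ∈ e := by
  intro v hv
  obtain ⟨e, heM, hve⟩ := hM.1.2 v
  exact ⟨e, Finset.mem_filter.mpr ⟨heM, inside_of_mem_inCD hM heM hve hv⟩, hve⟩

lemma filter_cut_eq {f : Fin n → Lbl m} {M : Finset (Edge n)} (hM : M ∈ MallT f) :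
    M.filter (· ∈ cutSet (Cset f)) =
      (M.filter (fun e => insideCD f e)).filter (· ∈ cutSet (Cset f)) := by
  ext e
  simp only [Finset.mem_filter]
  constructor
  · rintro ⟨h1, h2⟩; exact ⟨⟨h1, inside_of_cut hM h1 h2⟩, h2⟩
  · rintro ⟨⟨h1, _⟩, h2⟩; exact ⟨h1, h2⟩

/-- Decomposition of the event `M ∩ δ(C) = H` over the perfect matchings of `C ∪ D`. -/
lemma decomp_mem {f : Fin n → Lbl m} (hf : IsPartition n k m f)
    {M H : Finset (Edge n)} (hM : M ∈ MallT f) :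
    M.filter (· ∈ cutSet (Cset f)) = H ↔
      ∃ F, (IsMatching F ∧ F.card = k ∧ (∀ e ∈ F, insideCD f e) ∧
        F.filter (· ∈ cutSet (Cset f)) = H) ∧ F ⊆ M := by
  constructor
  · intro hcut
    refine ⟨M.filter (fun e => insideCD f e), ⟨?_, ?_, ?_, ?_⟩, Finset.filter_subset _ _⟩
    · exact matching_subset hM.1.1 (Finset.filter_subset _ _)
    · exact card_eq_of_cover hf (matching_subset hM.1.1 (Finset.filter_subset _ _))
        (fun e he => (Finset.mem_filter.mp he).2) (restrict_cover hM)
    · exact fun e he => (Finset.mem_filter.mp he).2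
    · rw [← filter_cut_eq hM]; exact hcut
  · rintro ⟨F, ⟨hFm, hFk, hin, hFcut⟩, hsub⟩
    rw [filter_cut_eq hM, filter_inside_eq hf hM hFm hFk hin hsub, hFcut]

end Aux3
section Aux4

open Finset

variable {n m k : ℕ}

lemma odd_cut_card {f : Fin n → Lbl m} (hk : Odd k) (hf : IsPartition n k m f)
    {M : Finset (Edge n)} (hM : IsPM M) :
    Odd (M.filter (· ∈ cutSet (Cset f))).card := by
  classical
  have hCeq : Cfin f = M.biUnion (fun e => eFin e ∩ Cfin f) := by
    ext v
    simp only [Finset.mem_biUnion, Finset.mem_inter]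
    constructor
    · intro hv
      obtain ⟨e, heM, hve⟩ := hM.2 v
      exact ⟨e, heM, mem_eFin.mpr hve, hv⟩
    · rintro ⟨e, _, _, hv⟩; exact hv
  have hdisj : ∀ e ∈ M, ∀ e' ∈ M, e ≠ e' →
      Disjoint (eFin e ∩ Cfin f) (eFin e' ∩ Cfin f) := fun e he e' he' hne =>
    (eFin_disjoint hM.1 he he' hne).mono (Finset.inter_subset_left) (Finset.inter_subset_left)
  have hsum : k = ∑ e ∈ M, (eFin e ∩ Cfin f).card := by
    have hb := Finset.card_biUnion hdisj
    rw [← hCeq] at hb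
    rw [← card_Cfin hf]; exact hb
  rw [← Finset.sum_filter_add_sum_filter_not M (· ∈ cutSet (Cset f))] at hsum
  have h1 : ∀ e ∈ M.filter (· ∈ cutSet (Cset f)), (eFin e ∩ Cfin f).card = 1 := by
    intro e he
    rw [Finset.mem_filter] at he
    obtain ⟨a, b, rfl, ha, hb⟩ := he.2
    have hab : a ≠ b := fun h => hb (h ▸ ha)
    have : eFin s(a, b) ∩ Cfin f = {a} := by
      ext v
      simp only [eFin_pair, Finset.mem_inter, Finset.mem_insert, Finset.mem_singleton, Cfin,
        Finset.mem_filter, Finset.mem_univ, true_and]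
      constructor
      · rintro ⟨rfl | rfl, hv⟩
        · rfl
        · exact absurd hv hb
      · rintro rfl; exact ⟨Or.inl rfl, ha⟩
    rw [this, Finset.card_singleton]
  have h2 : ∀ e ∈ M.filter (fun e => ¬ e ∈ cutSet (Cset f)), Even ((eFin e ∩ Cfin f).card) := by
    intro e he
    rw [Finset.mem_filter] at he
    obtain ⟨heM, hnc⟩ := he
    have hnd := hM.1.1 e heM
    induction e using Sym2.ind with
    | _ x y =>
      rw [Sym2.mk_isDiag_iff] at hnd
      rw [mem_cut_pair] at hnc
      push_neg at hnc
      by_cases hx : x ∈ Cset f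
      · have hy : y ∈ Cset f := hnc.1 hx
        have : eFin s(x, y) ∩ Cfin f = {x, y} := by
          ext v
          simp only [eFin_pair, Finset.mem_inter, Finset.mem_insert, Finset.mem_singleton, Cfin,
            Finset.mem_filter, Finset.mem_univ, true_and]
          constructor
          · rintro ⟨h, _⟩; exact h
          · rintro (rfl | rfl)
            · exact ⟨Or.inl rfl, hx⟩
            · exact ⟨Or.inr rfl, hy⟩
        rw [this, Finset.card_pair hnd]
        exact even_two
      · have hy : y ∉ Cset f := fun hy => hx (hnc.2 hy)
        have : eFin s(x, y) ∩ Cfin f = ∅ := by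
          ext v
          simp only [eFin_pair, Finset.mem_inter, Finset.mem_insert, Finset.mem_singleton, Cfin,
            Finset.mem_filter, Finset.mem_univ, true_and, Finset.notMem_empty, iff_false,
            not_and]
          rintro (rfl | rfl) <;> [exact hx; exact hy]
        rw [this]; simp
  rw [Finset.sum_congr rfl h1, Finset.sum_const, smul_eq_mul, mul_one] at hsum
  have heven : Even (∑ e ∈ M.filter (fun e => ¬ e ∈ cutSet (Cset f)), (eFin e ∩ Cfin f).card) :=
    Finset.even_sum _ (fun e he => h2 e he)
  have : Odd ((M.filter (· ∈ cutSet (Cset f))).card +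
      ∑ e ∈ M.filter (fun e => ¬ e ∈ cutSet (Cset f)), (eFin e ∩ Cfin f).card) := hsum ▸ hk
  rcases heven with ⟨t, ht⟩
  rcases this with ⟨s, hs⟩
  exact ⟨s - t, by omega⟩

end Aux4
section Aux5

open Finset

variable {n m k : ℕ}

lemma swap_lemma {f : Fin n → Lbl m} {M : Finset (Edge n)} (hM : M ∈ MallT f)
    {e₁ e₂ : Edge n} (h1 : e₁ ∈ M) (h2 : e₂ ∈ M) (hne : e₁ ≠ e₂)
    (hc1 : e₁ ∈ cutSet (Cset f)) (hc2 : e₂ ∈ cutSet (Cset f)) :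
    ∃ M', M' ∈ MallT f ∧ (∀ h ∈ M, h ≠ e₁ → h ≠ e₂ → h ∈ M') ∧
      M'.filter (· ∈ cutSet (Cset f)) =
        ((M.filter (· ∈ cutSet (Cset f))).erase e₁).erase e₂ := by
  classical
  obtain ⟨a₁, b₁, rfl, ha₁, hb₁⟩ := label_cut hM h1 hc1
  obtain ⟨a₂, b₂, rfl, ha₂, hb₂⟩ := label_cut hM h2 hc2
  have hmm := hM.1.1
  have hCD : Lbl.C (m := m) ≠ Lbl.D := by simp
  have hab₁ : a₁ ≠ b₁ := by intro h; rw [h, hb₁] at ha₁; exact absurd ha₁ (by simp)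
  have hab₂ : a₂ ≠ b₂ := by intro h; rw [h, hb₂] at ha₂; exact absurd ha₂ (by simp)
  have key : ∀ v, v ∈ s(a₁, b₁) → v ∉ s(a₂, b₂) := hmm.2 _ h1 _ h2 hne
  have haa : a₁ ≠ a₂ := fun h => key a₁ (by simp) (by simp [h])
  have hab : a₁ ≠ b₂ := fun h => key a₁ (by simp) (by simp [h])
  have hba : b₁ ≠ a₂ := fun h => key b₁ (by simp) (by simp [h])
  have hbb : b₁ ≠ b₂ := fun h => key b₁ (by simp) (by simp [h])
  refine ⟨insert s(a₁, a₂) (insert s(b₁, b₂) ((M.erase s(a₁, b₁)).erase s(a₂, b₂))), ?_⟩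
  have hmem : ∀ g, g ∈ insert s(a₁, a₂) (insert s(b₁, b₂) ((M.erase s(a₁, b₁)).erase s(a₂, b₂)))
      ↔ g = s(a₁, a₂) ∨ g = s(b₁, b₂) ∨ (g ∈ M ∧ g ≠ s(a₁, b₁) ∧ g ≠ s(a₂, b₂)) := by
    intro g
    simp only [Finset.mem_insert, Finset.mem_erase]
    tauto
  have hn1cut : s(a₁, a₂) ∉ cutSet (Cset f) := by
    intro hctr
    rcases mem_cut_pair.mp hctr with ⟨_, h⟩ | ⟨_, h⟩
    · exact h ha₂
    · exact h ha₁
  have hn2cut : s(b₁, b₂) ∉ cutSet (Cset f) := by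
    intro hctr
    rcases mem_cut_pair.mp hctr with ⟨h, _⟩ | ⟨h, _⟩
    · have : f b₁ = Lbl.C := h
      rw [hb₁] at this; exact absurd this (by simp)
    · have : f b₂ = Lbl.C := h
      rw [hb₂] at this; exact absurd this (by simp)
  have hA : ∀ g ∈ M, g ≠ s(a₁, b₁) → g ≠ s(a₂, b₂) → ∀ v ∈ s(a₁, a₂), v ∉ g := by
    intro g hg hg1 hg2 v hv
    rcases Sym2.mem_iff.mp hv with rfl | rfl
    · exact hmm.2 _ h1 g hg (Ne.symm hg1) v (by simp)
    · exact hmm.2 _ h2 g hg (Ne.symm hg2) v (by simp)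
  have hB : ∀ g ∈ M, g ≠ s(a₁, b₁) → g ≠ s(a₂, b₂) → ∀ v ∈ s(b₁, b₂), v ∉ g := by
    intro g hg hg1 hg2 v hv
    rcases Sym2.mem_iff.mp hv with rfl | rfl
    · exact hmm.2 _ h1 g hg (Ne.symm hg1) v (by simp)
    · exact hmm.2 _ h2 g hg (Ne.symm hg2) v (by simp)
  have hAB : ∀ v ∈ s(a₁, a₂), v ∉ s(b₁, b₂) := by
    intro v hv hv'
    rcases Sym2.mem_iff.mp hv with rfl | rfl <;> rcases Sym2.mem_iff.mp hv' with h | h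
    · exact hab₁ h
    · exact hab h
    · exact hba h.symm
    · exact hab₂ h
  refine ⟨⟨⟨⟨?_, ?_⟩, ?_⟩, ?_⟩, ?_, ?_⟩
  · -- non-diagonal
    intro g hg
    rcases (hmem g).mp hg with rfl | rfl | ⟨hgM, _, _⟩
    · rw [Sym2.mk_isDiag_iff]; exact haa
    · rw [Sym2.mk_isDiag_iff]; exact hbb
    · exact hmm.1 g hgM
  · -- pairwise disjoint
    intro e he g hg hneg v hv
    rcases (hmem e).mp he with rfl | rfl | ⟨heM, he1, he2⟩ <;>
      rcases (hmem g).mp hg with rfl | rfl | ⟨hgM, hg1, hg2⟩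
    · exact absurd rfl hneg
    · exact hAB v hv
    · exact hA g hgM hg1 hg2 v hv
    · exact fun hv' => hAB v hv' hv
    · exact absurd rfl hneg
    · exact hB g hgM hg1 hg2 v hv
    · exact fun hv' => hA e heM he1 he2 v hv' hv
    · exact fun hv' => hB e heM he1 he2 v hv' hv
    · exact hmm.2 e heM g hgM hneg v hv
  · -- coverage
    intro v
    obtain ⟨e, heM, hv⟩ := hM.1.2 v
    by_cases he1 : e = s(a₁, b₁)
    · subst he1
      rcases Sym2.mem_iff.mp hv with h | h
      · exact ⟨s(a₁, a₂), (hmem _).mpr (Or.inl rfl), by rw [h]; simp⟩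
      · exact ⟨s(b₁, b₂), (hmem _).mpr (Or.inr (Or.inl rfl)), by rw [h]; simp⟩
    by_cases he2 : e = s(a₂, b₂)
    · subst he2
      rcases Sym2.mem_iff.mp hv with h | h
      · exact ⟨s(a₁, a₂), (hmem _).mpr (Or.inl rfl), by rw [h]; simp⟩
      · exact ⟨s(b₁, b₂), (hmem _).mpr (Or.inr (Or.inl rfl)), by rw [h]; simp⟩
    · exact ⟨e, (hmem e).mpr (Or.inr (Or.inr ⟨heM, he1, he2⟩)), hv⟩
  · -- allowed
    intro g hg
    rcases (hmem g).mp hg with rfl | rfl | ⟨hgM, _, _⟩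
    · exact ⟨a₁, a₂, rfl, Or.inr (Or.inl ⟨Or.inl ha₁, Or.inl ha₂⟩)⟩
    · exact ⟨b₁, b₂, rfl, Or.inr (Or.inl ⟨Or.inr hb₁, Or.inr hb₂⟩)⟩
    · exact hM.2 g hgM
  · -- keeps other edges
    intro h hh h1' h2'
    exact (hmem h).mpr (Or.inr (Or.inr ⟨hh, h1', h2'⟩))
  · -- filter identity
    ext g
    simp only [Finset.mem_filter, Finset.mem_erase]
    constructor
    · rintro ⟨hgM', hgcut⟩
      rcases (hmem g).mp hgM' with rfl | rfl | ⟨hgM, hg1, hg2⟩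
      · exact absurd hgcut hn1cut
      · exact absurd hgcut hn2cut
      · exact ⟨hg2, hg1, hgM, hgcut⟩
    · rintro ⟨hg2, hg1, hgM, hgcut⟩
      exact ⟨(hmem g).mpr (Or.inr (Or.inr ⟨hgM, hg1, hg2⟩)), hgcut⟩

end Aux5
section Aux6

open Finset

variable {n m k : ℕ}

lemma exists_exact_cut {f : Fin n → Lbl m} (hk : Odd k) (hf : IsPartition n k m f)
    {H : Finset (Edge n)} (hH : IsCDMatching f 3 H)
    (hex : ∃ M, M ∈ MallT f ∧ H ⊆ M) :
    ∃ M', M' ∈ MallT f ∧ M'.filter (· ∈ cutSet (Cset f)) = H := by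
  classical
  obtain ⟨M, hM, hHM⟩ := hex
  suffices key : ∀ c (M : Finset (Edge n)), M ∈ MallT f → H ⊆ M →
      (M.filter (· ∈ cutSet (Cset f))).card = c →
      ∃ M', M' ∈ MallT f ∧ M'.filter (· ∈ cutSet (Cset f)) = H by
    exact key _ M hM hHM rfl
  intro c
  induction c using Nat.strong_induction_on with
  | _ c ih =>
    intro M hM hHM hcard
    have hHsub : H ⊆ M.filter (· ∈ cutSet (Cset f)) := fun h hh =>
      Finset.mem_filter.mpr ⟨hHM hh, cut_of_between (hH.2.2 h hh)⟩
    have h3 : 3 ≤ c := by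
      have := Finset.card_le_card hHsub
      rw [hcard, hH.2.1] at this
      exact this
    by_cases hc3 : c = 3
    · refine ⟨M, hM, ?_⟩
      exact (Finset.eq_of_subset_of_card_le hHsub (by rw [hcard, hc3, hH.2.1])).symm
    · have hodd : Odd c := hcard ▸ odd_cut_card hk hf hM.1
      have h5 : 5 ≤ c := by
        obtain ⟨t, rfl⟩ := hodd; omega
      have hlt : 1 < ((M.filter (· ∈ cutSet (Cset f))) \ H).card := by
        rw [Finset.card_sdiff_of_subset hHsub, hcard, hH.2.1]; omega
      obtain ⟨e₁, he₁, e₂, he₂, hne⟩ := Finset.one_lt_card.mp hlt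
      rw [Finset.mem_sdiff, Finset.mem_filter] at he₁ he₂
      obtain ⟨M', hM', hkeep, hfil⟩ :=
        swap_lemma hM he₁.1.1 he₂.1.1 hne he₁.1.2 he₂.1.2
      have hHM' : H ⊆ M' := fun h hh =>
        hkeep h (hHM hh) (fun h' => he₁.2 (h' ▸ hh)) (fun h' => he₂.2 (h' ▸ hh))
      have hcard' : (M'.filter (· ∈ cutSet (Cset f))).card = c - 2 := by
        rw [hfil, Finset.card_erase_of_mem, Finset.card_erase_of_mem, hcard]
        · omega
        · exact Finset.mem_filter.mpr he₁.1
        · exact Finset.mem_erase.mpr ⟨hne.symm, Finset.mem_filter.mpr he₂.1⟩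
      exact ih (c - 2) (by omega) M' hM' hHM' hcard'

end Aux6
section Aux7

open Finset

variable {n m k : ℕ}

lemma ncard_setOf {α : Type*} [Fintype α] (P : α → Prop) [DecidablePred P] :
    {x | P x}.ncard = (Finset.univ.filter P).card := by
  rw [← Set.ncard_coe_finset]
  congr 1
  ext x
  simp

lemma decomp_card {f : Fin n → Lbl m} (hf : IsPartition n k m f) (H : Finset (Edge n))
    (Q : Finset (Edge n) → Prop) :
    (Finset.univ.filter fun M : Finset (Edge n) =>
        M ∈ MallT f ∧ M.filter (· ∈ cutSet (Cset f)) = H ∧ Q M).card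
      = ∑ F ∈ Finset.univ.filter (fun F : Finset (Edge n) =>
          IsMatching F ∧ F.card = k ∧ (∀ e ∈ F, insideCD f e) ∧
            F.filter (· ∈ cutSet (Cset f)) = H),
          (Finset.univ.filter fun M : Finset (Edge n) =>
            M ∈ MallT f ∧ F ⊆ M ∧ Q M).card := by
  classical
  rw [← Finset.card_biUnion]
  · congr 1
    ext M
    simp only [Finset.mem_filter, Finset.mem_biUnion, Finset.mem_univ, true_and]
    constructor
    · rintro ⟨hM, hcut, hQ⟩
      obtain ⟨F, hFprops, hsub⟩ := (decomp_mem hf hM).mp hcut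
      exact ⟨F, hFprops, hM, hsub, hQ⟩
    · rintro ⟨F, hFprops, hM, hsub, hQ⟩
      exact ⟨hM, (decomp_mem hf hM).mpr ⟨F, hFprops, hsub⟩, hQ⟩
  · intro F₁ hF₁ F₂ hF₂ hne
    rw [Finset.mem_coe, Finset.mem_filter] at hF₁ hF₂
    apply Finset.disjoint_left.mpr
    intro M hM₁ hM₂
    rw [Finset.mem_filter] at hM₁ hM₂
    obtain ⟨_, hM, hsub₁, _⟩ := hM₁
    obtain ⟨_, _, hsub₂, _⟩ := hM₂
    obtain ⟨h1m, h1k, h1in, _⟩ := hF₁.2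
    obtain ⟨h2m, h2k, h2in, _⟩ := hF₂.2
    exact hne ((filter_inside_eq hf hM h1m h1k h1in hsub₁).symm.trans
      (filter_inside_eq hf hM h2m h2k h2in hsub₂))

end Aux7

section Aux8

open Finset

variable {n m k : ℕ}

lemma decomp_ncard {f : Fin n → Lbl m} (hf : IsPartition n k m f) (H : Finset (Edge n))
    (Q : Finset (Edge n) → Prop) :
    {M : Finset (Edge n) |
        M ∈ MallT f ∧ M.filter (· ∈ cutSet (Cset f)) = H ∧ Q M}.ncard
      = ∑ F ∈ Finset.univ.filter (fun F : Finset (Edge n) =>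
          IsMatching F ∧ F.card = k ∧ (∀ e ∈ F, insideCD f e) ∧
            F.filter (· ∈ cutSet (Cset f)) = H),
          {M : Finset (Edge n) | M ∈ MallT f ∧ F ⊆ M ∧ Q M}.ncard := by
  rw [ncard_setOf _, decomp_card hf H Q]
  exact Finset.sum_congr rfl (fun F _ => (ncard_setOf _).symm)

end Aux8
/-- If `(T,H)` is `M`-good for a 3-matching `H ⊆ C × D`, then
`(1/(1+ε))·p_{M,T}(H) ≤ p^ex_{M,T}(H) ≤ (1+ε)·p_{M,T}(H)`. -/
theorem pMex_bounds_of_MGood (k m : ℕ) (hk : Odd k) (hk3 : 3 ≤ k) (hm : Odd m)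
    (ε : ℝ) (hε : 0 < ε)
    (Mm : Set (Finset (Edge (npar k m)))) (hMm : ∀ M ∈ Mm, IsPM M)
    (f : Fin (npar k m) → Lbl m) (hf : IsPartition (npar k m) k m f)
    (H : Finset (Edge (npar k m))) (hH : IsCDMatching f 3 H)
    (hgood : MGood ε k f Mm H) :
    (1 / (1 + ε)) * pM f Mm H ≤ pMex f Mm H ∧
      pMex f Mm H ≤ (1 + ε) * pM f Mm H := by
  classical
  obtain ⟨hpos, hbnd⟩ := hgood
  have hinv : (0 : ℝ) < 1 / (1 + ε) := by positivity
  have hpMH : 0 < pM f Mm H := by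
    by_contra h
    push_neg at h
    nlinarith
  have hnum0 : {M | M ∈ MallT f ∧ H ⊆ M ∧ M ∈ Mm}.ncard ≠ 0 := by
    intro h0
    rw [pM, h0] at hpMH
    norm_num at hpMH
  obtain ⟨M₀, hM₀⟩ := Set.nonempty_of_ncard_ne_zero hnum0
  obtain ⟨Mex, hMex, hMexcut⟩ := exists_exact_cut hk hf hH ⟨M₀, hM₀.1, hM₀.2.1⟩
  set FF := Finset.univ.filter (fun F : Finset (Edge (npar k m)) =>
    IsMatching F ∧ F.card = k ∧ (∀ e ∈ F, insideCD f e) ∧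
      F.filter (· ∈ cutSet (Cset f)) = H) with hFFdef
  set nF : Finset (Edge (npar k m)) → ℕ := fun F =>
    {M | M ∈ MallT f ∧ F ⊆ M ∧ M ∈ Mm}.ncard with hnFdef
  set dF : Finset (Edge (npar k m)) → ℕ := fun F =>
    {M | M ∈ MallT f ∧ F ⊆ M}.ncard with hdFdef
  have hNum : {M | M ∈ MallT f ∧ M.filter (· ∈ cutSet (Cset f)) = H ∧ M ∈ Mm}.ncard
      = ∑ F ∈ FF, nF F := decomp_ncard hf H (· ∈ Mm)
  have hDen : {M | M ∈ MallT f ∧ M.filter (· ∈ cutSet (Cset f)) = H}.ncard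
      = ∑ F ∈ FF, dF F := by
    have h1 : {M : Finset (Edge (npar k m)) |
        M ∈ MallT f ∧ M.filter (· ∈ cutSet (Cset f)) = H}
        = {M : Finset (Edge (npar k m)) |
        M ∈ MallT f ∧ M.filter (· ∈ cutSet (Cset f)) = H ∧ True} := by
      ext M; simp
    have h3 : ∀ F : Finset (Edge (npar k m)),
        {M : Finset (Edge (npar k m)) | M ∈ MallT f ∧ F ⊆ M ∧ True}
          = {M : Finset (Edge (npar k m)) | M ∈ MallT f ∧ F ⊆ M} := by
      intro F; ext M; simp
    rw [h1, decomp_ncard hf H (fun _ => True)]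
    exact Finset.sum_congr rfl (fun F _ => by rw [h3 F])
  have hDpos : 0 < ∑ F ∈ FF, dF F := by
    rw [← hDen]
    exact (Set.ncard_pos (Set.toFinite _)).mpr ⟨Mex, hMex, hMexcut⟩
  have hDposR : (0 : ℝ) < ((∑ F ∈ FF, dF F : ℕ) : ℝ) := by exact_mod_cast hDpos
  have hpMexEq : pMex f Mm H
      = ((∑ F ∈ FF, nF F : ℕ) : ℝ) / ((∑ F ∈ FF, dF F : ℕ) : ℝ) := by
    rw [pMex, hNum, hDen]
  have hFbound : ∀ F ∈ FF,
      (1 / (1 + ε)) * pM f Mm H * (dF F : ℝ) ≤ (nF F : ℝ) ∧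
        (nF F : ℝ) ≤ (1 + ε) * pM f Mm H * (dF F : ℝ) := by
    intro F hF
    obtain ⟨hFm, hFk, hFin, hFcut⟩ := (Finset.mem_filter.mp hF).2
    have hHF : H ⊆ F := hFcut ▸ Finset.filter_subset _ _
    obtain ⟨hlo, hhi⟩ := hbnd F hFm hFk hHF hFin
    have hple : nF F ≤ dF F :=
      Set.ncard_le_ncard (fun M hMM => ⟨hMM.1, hMM.2.1⟩) (Set.toFinite _)
    have hpMF : pM f Mm F = (nF F : ℝ) / (dF F : ℝ) := rfl
    rcases Nat.eq_zero_or_pos (dF F) with h0 | hdpos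
    · have hn0 : nF F = 0 := by omega
      rw [h0, hn0]
      norm_num
    · have hd : (0 : ℝ) < (dF F : ℝ) := by exact_mod_cast hdpos
      rw [hpMF] at hlo hhi
      exact ⟨(le_div_iff₀ hd).mp hlo, (div_le_iff₀ hd).mp hhi⟩
  have hsumlo : (1 / (1 + ε)) * pM f Mm H * ((∑ F ∈ FF, dF F : ℕ) : ℝ)
      ≤ ((∑ F ∈ FF, nF F : ℕ) : ℝ) := by
    push_cast
    rw [Finset.mul_sum]
    exact Finset.sum_le_sum (fun F hF => (hFbound F hF).1)
  have hsumhi : ((∑ F ∈ FF, nF F : ℕ) : ℝ)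
      ≤ (1 + ε) * pM f Mm H * ((∑ F ∈ FF, dF F : ℕ) : ℝ) := by
    push_cast
    rw [Finset.mul_sum]
    exact Finset.sum_le_sum (fun F hF => (hFbound F hF).2)
  rw [hpMexEq]
  exact ⟨(le_div_iff₀ hDposR).mpr hsumlo, (div_le_iff₀ hDposR).mpr hsumhi⟩

end MatchingLB
end

section
/- Let ε > 0 and fix a rectangle 𝓡 = 𝓤 × 𝓜 with μ₁(𝓡) = 0. For any partition T and any k-matching F ⊆ C × D, the fraction of 3-element subsets H of F for which (T,H) is good is at most 100/k²: Pr_{H ∼ uniform on 3-element subsets of F}[GOOD(T,H)] ≤ 100/k². -/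
open scoped Classical

namespace MatchingLB

variable {n : ℕ}

lemma edge_exists (e : Edge n) : ∃ a b : Fin n, e = s(a, b) := by
  induction e using Sym2.ind with
  | _ a b => exact ⟨a, b, rfl⟩

lemma mem_cutSet_iff {U : Set (Fin n)} {a b : Fin n} :
    s(a, b) ∈ cutSet U ↔ (a ∈ U ∧ b ∉ U) ∨ (b ∈ U ∧ a ∉ U) := by
  constructor
  · rintro ⟨x, y, hxy, hx, hy⟩
    rcases Sym2.eq_iff.mp hxy with ⟨rfl, rfl⟩ | ⟨rfl, rfl⟩
    · exact Or.inl ⟨hx, hy⟩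
    · exact Or.inr ⟨hx, hy⟩
  · rintro (⟨hx, hy⟩ | ⟨hx, hy⟩)
    · exact ⟨a, b, rfl, hx, hy⟩
    · exact ⟨b, a, Sym2.eq_swap.symm, hx, hy⟩

lemma not_mem_cutSet {U : Set (Fin n)} {a b : Fin n}
    (h : a ∈ U ↔ b ∈ U) : s(a, b) ∉ cutSet U := by
  rw [mem_cutSet_iff]; tauto

lemma IsMatching.eq_of_mem {M : Finset (Edge n)} (hM : IsMatching M) {e e' : Edge n}
    (he : e ∈ M) (he' : e' ∈ M) {v : Fin n} (hv : v ∈ e) (hv' : v ∈ e') : e = e' := by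
  by_contra h
  exact hM.2 e he e' he' h v hv hv'

lemma IsMatching.subset {M M' : Finset (Edge n)} (hM : IsMatching M) (h : M' ⊆ M) :
    IsMatching M' :=
  ⟨fun e he => hM.1 e (h he), fun e he f hf hef v hv => hM.2 e (h he) f (h hf) hef v hv⟩

/-- `P` is a perfect matching on the vertex set `s`. -/
def MatchOn (s : Finset (Fin n)) (P : Finset (Edge n)) : Prop :=
  IsMatching P ∧ (∀ e ∈ P, ∀ v : Fin n, v ∈ e → v ∈ s) ∧ (∀ v ∈ s, ∃ e ∈ P, v ∈ e) ∧
    P.card * 2 = s.card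

lemma matchOn_empty : MatchOn (∅ : Finset (Fin n)) ∅ := by
  refine ⟨⟨?_, ?_⟩, ?_, ?_, ?_⟩ <;> simp

lemma matchOn_pair {a b : Fin n} (hab : a ≠ b) : MatchOn {a, b} {s(a, b)} := by
  refine ⟨⟨?_, ?_⟩, ?_, ?_, ?_⟩
  · intro e he
    simp only [Finset.mem_singleton] at he
    subst he
    simpa using hab
  · intro e he f hf hef
    simp only [Finset.mem_singleton] at he hf
    subst he; subst hf; exact absurd rfl hef
  · intro e he v hv
    simp only [Finset.mem_singleton] at he
    subst he
    rw [Sym2.mem_iff] at hv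
    simp [Finset.mem_insert, hv.symm]
    tauto
  · intro v hv
    refine ⟨s(a,b), Finset.mem_singleton_self _, ?_⟩
    simp only [Finset.mem_insert, Finset.mem_singleton] at hv
    rw [Sym2.mem_iff]; tauto
  · rw [Finset.card_singleton, Finset.card_insert_of_notMem (by simpa using hab),
      Finset.card_singleton]

lemma MatchOn.union {s t : Finset (Fin n)} {P Q : Finset (Edge n)}
    (hP : MatchOn s P) (hQ : MatchOn t Q) (hst : Disjoint s t) :
    MatchOn (s ∪ t) (P ∪ Q) := by
  have hPQ : Disjoint P Q := by
    rw [Finset.disjoint_left]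
    intro e heP heQ
    obtain ⟨a, b, rfl⟩ := edge_exists e
    have ha : a ∈ s := hP.2.1 _ heP a (by simp)
    have ha' : a ∈ t := hQ.2.1 _ heQ a (by simp)
    exact (Finset.disjoint_left.mp hst ha) ha'
  refine ⟨⟨?_, ?_⟩, ?_, ?_, ?_⟩
  · intro e he
    rcases Finset.mem_union.mp he with h | h
    · exact hP.1.1 e h
    · exact hQ.1.1 e h
  · intro e he f hf hef v hv hvf
    rcases Finset.mem_union.mp he with h | h <;> rcases Finset.mem_union.mp hf with h' | h'
    · exact hP.1.2 e h f h' hef v hv hvf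
    · exact Finset.disjoint_left.mp hst (hP.2.1 e h v hv) (hQ.2.1 f h' v hvf)
    · exact Finset.disjoint_left.mp hst (hP.2.1 f h' v hvf) (hQ.2.1 e h v hv)
    · exact hQ.1.2 e h f h' hef v hv hvf
  · intro e he v hv
    rcases Finset.mem_union.mp he with h | h
    · exact Finset.mem_union_left _ (hP.2.1 e h v hv)
    · exact Finset.mem_union_right _ (hQ.2.1 e h v hv)
  · intro v hv
    rcases Finset.mem_union.mp hv with h | h
    · obtain ⟨e, he, hve⟩ := hP.2.2.1 v h
      exact ⟨e, Finset.mem_union_left _ he, hve⟩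
    · obtain ⟨e, he, hve⟩ := hQ.2.2.1 v h
      exact ⟨e, Finset.mem_union_right _ he, hve⟩
  · rw [Finset.card_union_of_disjoint hPQ, Finset.card_union_of_disjoint hst,
      Nat.add_mul, hP.2.2.2, hQ.2.2.2]

lemma exists_matchOn (s : Finset (Fin n)) (hs : Even s.card) : ∃ P, MatchOn s P := by
  induction s using Finset.strongInduction with
  | _ s ih =>
    rcases s.eq_empty_or_nonempty with rfl | ⟨a, ha⟩
    · exact ⟨∅, matchOn_empty⟩
    · have h1 : 1 ≤ s.card := Finset.card_pos.mpr ⟨a, ha⟩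
      have h2 : 2 ≤ s.card := by
        rcases hs with ⟨c, hc⟩; omega
      have hea : (s.erase a).Nonempty := by
        rw [← Finset.card_pos, Finset.card_erase_of_mem ha]; omega
      obtain ⟨b, hb⟩ := hea
      have hab : a ≠ b := fun h => (Finset.ne_of_mem_erase hb) h.symm
      have hbs : b ∈ s := Finset.mem_of_mem_erase hb
      set s' := (s.erase a).erase b with hs'
      have hsub : s' ⊆ s := Finset.Subset.trans (Finset.erase_subset _ _) (Finset.erase_subset _ _)
      have hssub : s' ⊂ s := Finset.ssubset_of_subset_of_ssubset
        (Finset.Subset.refl s') (Finset.ssubset_iff_of_subset hsub |>.mpr ⟨a, ha, by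
          simp [hs', hab]⟩)
      have hcard : s'.card = s.card - 2 := by
        rw [hs', Finset.card_erase_of_mem hb, Finset.card_erase_of_mem ha]; omega
      obtain ⟨P, hP⟩ := ih s' hssub (by rcases hs with ⟨c, hc⟩; rw [hcard]; exact ⟨c - 1, by omega⟩)
      have hmoab : MatchOn {a, b} {s(a, b)} := matchOn_pair hab
      have hdis : Disjoint ({a, b} : Finset (Fin n)) s' := by
        rw [Finset.disjoint_left]
        intro x hx hx'
        simp only [Finset.mem_insert, Finset.mem_singleton] at hx
        rcases hx with rfl | rfl
        · exact (Finset.ne_of_mem_erase (Finset.mem_of_mem_erase hx')) rfl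
        · exact (Finset.ne_of_mem_erase hx') rfl
      have hset : ({a, b} : Finset (Fin n)) ∪ s' = s := by
        ext x
        simp only [Finset.mem_union, Finset.mem_insert, Finset.mem_singleton, hs',
          Finset.mem_erase]
        constructor
        · rintro ((rfl | rfl) | ⟨-, -, hx⟩) <;> assumption
        · intro hx
          by_cases hxa : x = a
          · tauto
          · by_cases hxb : x = b <;> tauto
      exact ⟨{s(a, b)} ∪ P, hset ▸ hmoab.union hP hdis⟩


-- MORE

lemma k3_even (k : ℕ) (hk : Odd k) (hk3 : 3 ≤ k) : Even (k - 3) := by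
  obtain ⟨a, ha⟩ := hk
  exact ⟨a - 1, by omega⟩

lemma npar_even (k m : ℕ) (hk : Odd k) (hk3 : 3 ≤ k) : npar k m % 2 = 0 := by
  rw [← Nat.even_iff]
  exact Even.add ((k3_even k hk hk3).mul_left _) ⟨k, two_mul k⟩

lemma tpar_odd (k m : ℕ) (hk : Odd k) (hk3 : 3 ≤ k) : tpar k m % 2 = 1 := by
  rw [← Nat.odd_iff]
  exact Even.add_odd ((k3_even k hk hk3).mul_left _) ⟨1, rfl⟩

lemma tpar_lt_npar (k m : ℕ) (hk3 : 3 ≤ k) (hm : Odd m) : tpar k m < npar k m := by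
  obtain ⟨a, ha⟩ := hm
  subst ha
  unfold tpar npar
  have h1 : (2 * a + 1 + 1) / 2 = a + 1 := by omega
  rw [h1]
  nlinarith [Nat.sub_add_cancel hk3]

lemma Qset_nonempty (k m : ℕ) (hk : Odd k) (hk3 : 3 ≤ k) (hm : Odd m) :
    (Qset (npar k m) (tpar k m) 1).Nonempty := by
  set n := npar k m with hn
  set t := tpar k m with ht
  have hne : n % 2 = 0 := npar_even k m hk hk3
  have hto : t % 2 = 1 := tpar_odd k m hk hk3
  have htn : t < n := tpar_lt_npar k m hk3 hm
  -- the cut: first t vertices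
  have hmlt : ∀ x ∈ Finset.range t, x < n := fun x hx => lt_trans (Finset.mem_range.mp hx) htn
  set U : Finset (Fin n) := (Finset.range t).attachFin hmlt with hU
  have hUcard : U.card = t := by rw [hU, Finset.card_attachFin, Finset.card_range]
  have hUmem : ∀ v : Fin n, v ∈ U ↔ (v : ℕ) < t := by
    intro v; rw [hU, Finset.mem_attachFin, Finset.mem_range]
  -- the matching: pair 2i with 2i+1
  set g : Fin (n / 2) → Edge n := fun i =>
    s((⟨2 * i.1, by have := i.isLt; omega⟩ : Fin n), (⟨2 * i.1 + 1, by have := i.isLt; omega⟩ : Fin n))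
    with hg
  set M : Finset (Edge n) := Finset.univ.image g with hM
  have hgmem : ∀ (i : Fin (n / 2)) (v : Fin n), v ∈ g i ↔ (v : ℕ) = 2 * i.1 ∨ (v : ℕ) = 2 * i.1 + 1 := by
    intro i v
    rw [hg]
    simp only [Sym2.mem_iff]
    constructor
    · rintro (rfl | rfl) <;> simp
    · rintro (h | h)
      · left; exact Fin.ext h
      · right; exact Fin.ext h
  have hPM : IsPM M := by
    refine ⟨⟨?_, ?_⟩, ?_⟩
    · intro e he
      obtain ⟨i, -, rfl⟩ := Finset.mem_image.mp he
      rw [hg]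
      simp only [Sym2.isDiag_iff_proj_eq]
      intro hcon
      have := congrArg Fin.val hcon
      simp at this
    · intro e he e' he' hee v hv hv'
      obtain ⟨i, -, rfl⟩ := Finset.mem_image.mp he
      obtain ⟨j, -, rfl⟩ := Finset.mem_image.mp he'
      rw [hgmem] at hv hv'
      have hij : i.1 = j.1 := by omega
      exact hee (congrArg g (Fin.ext hij))
    · intro v
      have hvlt : (v : ℕ) < n := v.isLt
      have hi : (v : ℕ) / 2 < n / 2 := by omega
      refine ⟨g ⟨(v : ℕ) / 2, hi⟩, Finset.mem_image_of_mem g (Finset.mem_univ _), ?_⟩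
      rw [hgmem]
      simp only
      omega
  -- the unique crossing edge
  have hi0 : t / 2 < n / 2 := by omega
  set i0 : Fin (n / 2) := ⟨t / 2, hi0⟩ with hi0'
  have hcut : (M : Set (Edge n)) ∩ cutSet (U : Set (Fin n)) = {g i0} := by
    ext e
    simp only [Set.mem_inter_iff, Finset.mem_coe, Set.mem_singleton_iff]
    constructor
    · rintro ⟨heM, hecut⟩
      obtain ⟨i, -, rfl⟩ := Finset.mem_image.mp heM
      obtain ⟨x, y, hxy, hx, hy⟩ := hecut
      rw [Finset.mem_coe, hUmem] at hx
      rw [Finset.mem_coe, hUmem] at hy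
      have hxe : x ∈ g i := by rw [hxy]; simp
      have hye : y ∈ g i := by rw [hxy]; exact Sym2.mem_mk_right x y
      rw [hgmem] at hxe hye
      have : i.1 = t / 2 := by omega
      exact congrArg g (Fin.ext this)
    · rintro rfl
      refine ⟨Finset.mem_image_of_mem g (Finset.mem_univ _), ?_⟩
      refine ⟨⟨2 * i0.1, by have := i0.isLt; omega⟩, ⟨2 * i0.1 + 1, by have := i0.isLt; omega⟩, rfl, ?_, ?_⟩
      · rw [Finset.mem_coe, hUmem]; simp only [hi0']; omega
      · rw [Finset.mem_coe, hUmem]; simp only [hi0']; omega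
  exact ⟨(U, M), hUcard, hPM, by rw [hcut]; exact Set.ncard_singleton _⟩

-- MORE2

lemma nonempty_of_div_pos {α : Type*} {S : Set α} {d : ℝ}
    (h : 0 < (S.ncard : ℝ) / d) : S.Nonempty := by
  rcases S.eq_empty_or_nonempty with rfl | h'
  · simp at h
  · exact h'

lemma rect_inter_Q1_empty (k m : ℕ) (hk : Odd k) (hk3 : 3 ≤ k) (hm : Odd m)
    (Uu : Set (Finset (Fin (npar k m)))) (Mm : Set (Finset (Edge (npar k m))))
    (hmu1 : mu (npar k m) (tpar k m) 1 (Uu ×ˢ Mm) = 0) :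
    ∀ p ∈ Uu ×ˢ Mm, p ∉ Qset (npar k m) (tpar k m) 1 := by
  have hQne := Qset_nonempty k m hk hk3 hm
  have hQpos : 0 < ((Qset (npar k m) (tpar k m) 1).ncard : ℝ) := by
    have := (Set.ncard_pos (Set.toFinite _)).mpr hQne
    exact_mod_cast this
  unfold mu at hmu1
  rw [div_eq_zero_iff] at hmu1
  rcases hmu1 with h | h
  · have : (Uu ×ˢ Mm ∩ Qset (npar k m) (tpar k m) 1) = ∅ := by
      rw [← Set.ncard_eq_zero (Set.toFinite _)]
      exact_mod_cast h
    intro p hp hpQ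
    exact Set.eq_empty_iff_forall_notMem.mp this p ⟨hp, hpQ⟩
  · exact absurd h (ne_of_gt hQpos)

lemma allowedEdge_elim {n m : ℕ} {f : Fin n → Lbl m} {a b : Fin n}
    (h : allowedEdge f s(a, b)) :
    (∃ i, f a = Lbl.A i ∧ f b = Lbl.A i) ∨ (inCD f a ∧ inCD f b) ∨
      (∃ i, f a = Lbl.B i ∧ f b = Lbl.B i) := by
  obtain ⟨x, y, hxy, hP⟩ := h
  rcases Sym2.eq_iff.mp hxy with ⟨rfl, rfl⟩ | ⟨rfl, rfl⟩
  · exact hP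
  · rcases hP with ⟨i, h1, h2⟩ | ⟨h1, h2⟩ | ⟨i, h1, h2⟩
    exacts [Or.inl ⟨i, h2, h1⟩, Or.inr (Or.inl ⟨h2, h1⟩), Or.inr (Or.inr ⟨i, h2, h1⟩)]

lemma cut_eq_singleton {n m : ℕ} {f : Fin n → Lbl m} {t : ℕ}
    {U : Finset (Fin n)} {M F' : Finset (Edge n)} {estar : Edge n}
    (hU : U ∈ UallT t f) (hM : M ∈ MallT f) (hF'M : F' ⊆ M)
    (hcover : ∀ v : Fin n, inCD f v → ∃ e ∈ F', v ∈ e)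
    (hstar : estar ∈ F') (hcross : estar ∈ cutSet (U : Set (Fin n)))
    (hothers : ∀ e ∈ F', e ≠ estar → e ∉ cutSet (U : Set (Fin n))) :
    (M : Set (Edge n)) ∩ cutSet (U : Set (Fin n)) = {estar} := by
  ext e
  simp only [Set.mem_inter_iff, Finset.mem_coe, Set.mem_singleton_iff]
  constructor
  · rintro ⟨heM, hecut⟩
    obtain ⟨a, b, rfl, haU, hbU⟩ := hecut
    rw [Finset.mem_coe] at haU
    have hall := allowedEdge_elim (hM.2 _ heM)
    rcases hall with ⟨i, hA1, hA2⟩ | ⟨hca, hcb⟩ | ⟨i, hB1, hB2⟩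
    · rcases hU.2.2 i with hdis | hsub
      · exact absurd hA1 (Set.disjoint_left.mp hdis (Finset.mem_coe.mpr haU))
      · exact absurd (Finset.mem_coe.mp (hsub hA2)) hbU
    · have he' := hcover a hca
      obtain ⟨e', he'F, hae'⟩ := he'
      have : s(a, b) = e' :=
        hM.1.1.eq_of_mem heM (hF'M he'F) (Sym2.mem_mk_left a b) hae'
      rw [← this] at he'F
      by_contra hne
      exact hothers _ he'F hne ⟨a, b, rfl, Finset.mem_coe.mpr haU, hbU⟩
    · rcases hU.2.1 a haU with ⟨i', hA⟩ | hC
      · rw [hA] at hB1; cases hB1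
      · rw [hC] at hB1; cases hB1
  · rintro rfl
    exact ⟨hF'M hstar, hcross⟩

-- MORE3

lemma exists_Fprime {n mp k : ℕ} (hk : Odd k) (hk11 : 11 ≤ k)
    {f : Fin n → Lbl mp}
    (hfC : {v | f v = Lbl.C}.ncard = k) (hfD : {v | f v = Lbl.D}.ncard = k)
    {F H1 H2 : Finset (Edge n)}
    (hF : IsCDMatching f k F)
    (h1F : H1 ⊆ F) (h2F : H2 ⊆ F) (h1c : H1.card = 3) (h2c : H2.card = 3)
    (hint : (H1 ∩ H2).card ≤ 1)
    {U : Finset (Fin n)}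
    (hUC : ∀ v : Fin n, f v = Lbl.C → (v ∈ U ↔ v ∈ VSet H1))
    (hUD : ∀ v : Fin n, f v = Lbl.D → v ∉ U) :
    ∃ (F' : Finset (Edge n)) (estar : Edge n), IsMatching F' ∧ F'.card = k ∧ H2 ⊆ F' ∧
      (∀ e ∈ F', insideCD f e) ∧
      (∀ v, inCD f v → ∃ e ∈ F', v ∈ e) ∧
      estar ∈ F' ∧ estar ∈ cutSet (U : Set (Fin n)) ∧
      ∀ e ∈ F', e ≠ estar → e ∉ cutSet (U : Set (Fin n)) := by
  classical
  have hk3 : 3 ≤ k := by omega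
  set Cfin : Finset (Fin n) := Finset.univ.filter (fun v => f v = Lbl.C) with hCfin
  set Dfin : Finset (Fin n) := Finset.univ.filter (fun v => f v = Lbl.D) with hDfin
  have hmemC : ∀ v : Fin n, v ∈ Cfin ↔ f v = Lbl.C := by
    intro v; rw [hCfin, Finset.mem_filter]; simp
  have hmemD : ∀ v : Fin n, v ∈ Dfin ↔ f v = Lbl.D := by
    intro v; rw [hDfin, Finset.mem_filter]; simp
  have hCk : Cfin.card = k := by
    rw [← Set.ncard_coe_finset Cfin]
    have : (Cfin : Set (Fin n)) = {v | f v = Lbl.C} := by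
      ext v; rw [Finset.mem_coe, hmemC]; rfl
    rw [this, hfC]
  have hDk : Dfin.card = k := by
    rw [← Set.ncard_coe_finset Dfin]
    have : (Dfin : Set (Fin n)) = {v | f v = Lbl.D} := by
      ext v; rw [Finset.mem_coe, hmemD]; rfl
    rw [this, hfD]
  have hCDdis : Disjoint Cfin Dfin := by
    rw [Finset.disjoint_left]
    intro v hv hv'
    rw [hmemC] at hv; rw [hmemD] at hv'
    rw [hv] at hv'; cases hv'
  have hCne : Cfin.Nonempty := Finset.card_pos.mp (by omega)
  obtain ⟨v0, -⟩ := hCne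
  -- endpoint choice functions
  have hch : ∀ e : Edge n, ∃ p : Fin n × Fin n,
      e ∈ F → e = s(p.1, p.2) ∧ f p.1 = Lbl.C ∧ f p.2 = Lbl.D := by
    intro e
    by_cases he : e ∈ F
    · obtain ⟨a, b, h⟩ := hF.2.2 e he
      exact ⟨(a, b), fun _ => h⟩
    · exact ⟨(v0, v0), fun h => absurd h he⟩
  choose pfun hp using hch
  set ce : Edge n → Fin n := fun e => (pfun e).1 with hce
  set de : Edge n → Fin n := fun e => (pfun e).2 with hde
  have hrep : ∀ e ∈ F, e = s(ce e, de e) := fun e he => (hp e he).1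
  have hceC : ∀ e ∈ F, f (ce e) = Lbl.C := fun e he => (hp e he).2.1
  have hdeD : ∀ e ∈ F, f (de e) = Lbl.D := fun e he => (hp e he).2.2
  have hmemF : ∀ e ∈ F, ∀ v : Fin n, v ∈ e ↔ (v = ce e ∨ v = de e) := by
    intro e he v
    conv_lhs => rw [hrep e he]
    exact Sym2.mem_iff
  have hceinj : ∀ e ∈ F, ∀ e' ∈ F, ce e = ce e' → e = e' := by
    intro e he e' he' hq
    exact hF.1.eq_of_mem he he' ((hmemF e he _).mpr (Or.inl rfl))
      ((hmemF e' he' _).mpr (Or.inl hq))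
  have hdeinj : ∀ e ∈ F, ∀ e' ∈ F, de e = de e' → e = e' := by
    intro e he e' he' hq
    exact hF.1.eq_of_mem he he' ((hmemF e he _).mpr (Or.inr rfl))
      ((hmemF e' he' _).mpr (Or.inr hq))
  set SC1 : Finset (Fin n) := H1.image ce with hSC1
  set SC2 : Finset (Fin n) := H2.image ce with hSC2
  set SD2 : Finset (Fin n) := H2.image de with hSD2
  have hSC1card : SC1.card = 3 := by
    rw [hSC1, Finset.card_image_of_injOn, h1c]
    intro e he e' he' hq
    exact hceinj e (h1F he) e' (h1F he') hq
  have hSC2card : SC2.card = 3 := by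
    rw [hSC2, Finset.card_image_of_injOn, h2c]
    intro e he e' he' hq
    exact hceinj e (h2F he) e' (h2F he') hq
  have hSD2card : SD2.card = 3 := by
    rw [hSD2, Finset.card_image_of_injOn, h2c]
    intro e he e' he' hq
    exact hdeinj e (h2F he) e' (h2F he') hq
  have hSC1sub : SC1 ⊆ Cfin := by
    intro v hv
    obtain ⟨e, he, rfl⟩ := Finset.mem_image.mp hv
    rw [hmemC]; exact hceC e (h1F he)
  have hSC2sub : SC2 ⊆ Cfin := by
    intro v hv
    obtain ⟨e, he, rfl⟩ := Finset.mem_image.mp hv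
    rw [hmemC]; exact hceC e (h2F he)
  have hSD2sub : SD2 ⊆ Dfin := by
    intro v hv
    obtain ⟨e, he, rfl⟩ := Finset.mem_image.mp hv
    rw [hmemD]; exact hdeD e (h2F he)
  -- membership in VSet H1 for C-labelled vertices
  have hVSet1 : ∀ v : Fin n, f v = Lbl.C → (v ∈ VSet H1 ↔ v ∈ SC1) := by
    intro v hv
    constructor
    · rintro ⟨e, he, hve⟩
      rcases (hmemF e (h1F he) v).mp hve with rfl | rfl
      · exact Finset.mem_image_of_mem ce he
      · rw [hdeD e (h1F he)] at hv; cases hv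
    · intro hv'
      obtain ⟨e, he, rfl⟩ := Finset.mem_image.mp hv'
      exact ⟨e, he, (hmemF e (h1F he) _).mpr (Or.inl rfl)⟩
  have hU1 : ∀ v ∈ SC1, v ∈ U := by
    intro v hv
    obtain ⟨e, he, rfl⟩ := Finset.mem_image.mp hv
    exact (hUC _ (hceC e (h1F he))).mpr
      ⟨e, he, (hmemF e (h1F he) _).mpr (Or.inl rfl)⟩
  have hU2 : ∀ v : Fin n, f v = Lbl.C → v ∉ SC1 → v ∉ U := by
    intro v hv hvn hvU
    exact hvn ((hVSet1 v hv).mp ((hUC v hv).mp hvU))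
  -- crossing of edges of F
  have hcross_of_H1 : ∀ e ∈ H1, e ∈ cutSet (U : Set (Fin n)) := by
    intro e he
    refine ⟨ce e, de e, hrep e (h1F he), ?_, ?_⟩
    · exact Finset.mem_coe.mpr (hU1 _ (Finset.mem_image_of_mem ce he))
    · intro hcon
      exact hUD _ (hdeD e (h1F he)) (Finset.mem_coe.mp hcon)
  have hnocross_H2 : ∀ e ∈ H2, e ∉ H1 → e ∉ cutSet (U : Set (Fin n)) := by
    intro e he hne1
    rw [hrep e (h2F he)]
    apply not_mem_cutSet
    have h1 : ce e ∉ U := by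
      apply hU2 _ (hceC e (h2F he))
      intro hmem
      obtain ⟨e', he', hq⟩ := Finset.mem_image.mp hmem
      have : e' = e := hceinj e' (h1F he') e (h2F he) hq
      exact hne1 (this ▸ he')
    have h2 : de e ∉ U := hUD _ (hdeD e (h2F he))
    constructor
    · intro h; exact absurd (Finset.mem_coe.mp h) h1
    · intro h; exact absurd (Finset.mem_coe.mp h) h2
  -- the set W of C-endpoints of H1 not used by H2
  set W : Finset (Fin n) := SC1 \ SC2 with hW
  have hWeq : W = (H1 \ H2).image ce := by
    ext v
    simp only [hW, Finset.mem_sdiff, Finset.mem_image, hSC1, hSC2]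
    constructor
    · rintro ⟨⟨e, he, rfl⟩, hn⟩
      refine ⟨e, ⟨he, fun hmem => hn ⟨e, hmem, rfl⟩⟩, rfl⟩
    · rintro ⟨e, ⟨he, hne⟩, rfl⟩
      refine ⟨⟨e, he, rfl⟩, fun ⟨e', he', hq⟩ => ?_⟩
      exact hne ((hceinj e' (h2F he') e (h1F he) hq) ▸ he')
  have hWsubC : W ⊆ Cfin \ SC2 := by
    intro v hv
    rw [hW, Finset.mem_sdiff] at hv
    rw [Finset.mem_sdiff]
    exact ⟨hSC1sub hv.1, hv.2⟩
  have hWcard : W.card = 3 - (H1 ∩ H2).card := by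
    have hsum := Finset.card_sdiff_add_card_inter H1 H2
    have himg : ((H1 \ H2).image ce).card = (H1 \ H2).card := by
      apply Finset.card_image_of_injOn
      intro e he e' he' hq
      have he1 : e ∈ H1 := (Finset.mem_sdiff.mp (Finset.mem_coe.mp he)).1
      have he1' : e' ∈ H1 := (Finset.mem_sdiff.mp (Finset.mem_coe.mp he')).1
      exact hceinj e (h1F he1) e' (h1F he1') hq
    rw [hWeq, himg]
    omega
  have hWU : ∀ v ∈ W, v ∈ U := fun v hv => hU1 v (Finset.mem_sdiff.mp hv).1
  -- key case split: produce E0, VE0, estar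
  have key : ∃ (E0 : Finset (Edge n)) (VE0 : Finset (Fin n)) (estar : Edge n),
      MatchOn VE0 E0 ∧ VE0 ⊆ Cfin \ SC2 ∧ W ⊆ VE0 ∧ Even VE0.card ∧
      (estar ∈ E0 ∨ estar ∈ H2) ∧ estar ∈ cutSet (U : Set (Fin n)) ∧
      (∀ e ∈ E0, e ≠ estar → e ∉ cutSet (U : Set (Fin n))) ∧
      (∀ e ∈ H2, e ≠ estar → e ∉ cutSet (U : Set (Fin n))) := by
    rcases Nat.le_one_iff_eq_zero_or_eq_one.mp hint with h0 | h1
    · -- disjoint case : H1 ∩ H2 = ∅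
      have hdisH : H1 ∩ H2 = ∅ := Finset.card_eq_zero.mp h0
      have hW3 : W.card = 3 := by omega
      obtain ⟨u1, u2, u3, h12, h13, h23, hWset⟩ := Finset.card_eq_three.mp hW3
      have hu1W : u1 ∈ W := by rw [hWset]; simp
      have hu2W : u2 ∈ W := by rw [hWset]; simp
      have hu3W : u3 ∈ W := by rw [hWset]; simp
      -- pick an extra C vertex
      have hrcard : ((Cfin \ SC2) \ W).card = k - 6 := by
        rw [Finset.card_sdiff_of_subset hWsubC, Finset.card_sdiff_of_subset hSC2sub, hCk, hSC2card, hW3]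
        omega
      have hrne : (((Cfin \ SC2) \ W)).Nonempty := Finset.card_pos.mp (by omega)
      obtain ⟨wv, hwv⟩ := hrne
      rw [Finset.mem_sdiff] at hwv
      have hwvC : wv ∈ Cfin \ SC2 := hwv.1
      have hwvW : wv ∉ W := hwv.2
      have hwvU : wv ∉ U := by
        apply hU2 _ ((hmemC wv).mp (Finset.mem_sdiff.mp hwvC).1)
        intro hcon
        exact hwvW (by rw [hW, Finset.mem_sdiff]; exact ⟨hcon, (Finset.mem_sdiff.mp hwvC).2⟩)
      have hwu3 : u3 ≠ wv := fun h => hwvW (h ▸ hu3W)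
      have hd12_3w : Disjoint ({u1, u2} : Finset (Fin n)) {u3, wv} := by
        rw [Finset.disjoint_left]
        intro x hx hx'
        simp only [Finset.mem_insert, Finset.mem_singleton] at hx hx'
        rcases hx with rfl | rfl <;> rcases hx' with rfl | rfl
        · exact h13 rfl
        · exact hwvW hu1W
        · exact h23 rfl
        · exact hwvW hu2W
      have hmo : MatchOn ({u1, u2} ∪ {u3, wv}) ({s(u1, u2)} ∪ {s(u3, wv)}) :=
        (matchOn_pair h12).union (matchOn_pair hwu3) hd12_3w
      refine ⟨{s(u1, u2)} ∪ {s(u3, wv)}, {u1, u2} ∪ {u3, wv}, s(u3, wv),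
        hmo, ?_, ?_, ?_, Or.inl (by simp), ?_, ?_, ?_⟩
      · intro v hv
        simp only [Finset.mem_union, Finset.mem_insert, Finset.mem_singleton] at hv
        rcases hv with (rfl | rfl) | (rfl | rfl)
        exacts [hWsubC hu1W, hWsubC hu2W, hWsubC hu3W, hwvC]
      · intro v hv
        rw [hWset] at hv
        simp only [Finset.mem_insert, Finset.mem_singleton] at hv
        simp only [Finset.mem_union, Finset.mem_insert, Finset.mem_singleton]
        tauto
      · rw [Finset.card_union_of_disjoint hd12_3w]
        rw [Finset.card_insert_of_notMem (by simpa using h12),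
          Finset.card_insert_of_notMem (by simpa using hwu3), Finset.card_singleton]
        exact ⟨2, rfl⟩
      · exact ⟨u3, wv, rfl, Finset.mem_coe.mpr (hWU u3 hu3W), fun h => hwvU (Finset.mem_coe.mp h)⟩
      · intro e he hne
        simp only [Finset.mem_union, Finset.mem_singleton] at he
        rcases he with rfl | rfl
        · exact not_mem_cutSet (iff_of_true (Finset.mem_coe.mpr (hWU u1 hu1W))
            (Finset.mem_coe.mpr (hWU u2 hu2W)))
        · exact absurd rfl hne
      · intro e he _
        apply hnocross_H2 e he
        intro hcon
        have : e ∈ H1 ∩ H2 := Finset.mem_inter.mpr ⟨hcon, he⟩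
        rw [hdisH] at this
        exact absurd this (Finset.notMem_empty e)
    · -- shared edge case : H1 ∩ H2 = {e0}
      obtain ⟨e0, he0⟩ := Finset.card_eq_one.mp h1
      have he0H1 : e0 ∈ H1 := (Finset.mem_inter.mp (he0 ▸ Finset.mem_singleton_self e0)).1
      have he0H2 : e0 ∈ H2 := (Finset.mem_inter.mp (he0 ▸ Finset.mem_singleton_self e0)).2
      have hW2 : W.card = 2 := by omega
      obtain ⟨u1, u2, h12, hWset⟩ := Finset.card_eq_two.mp hW2
      have hu1W : u1 ∈ W := by rw [hWset]; simp
      have hu2W : u2 ∈ W := by rw [hWset]; simp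
      refine ⟨{s(u1, u2)}, W, e0, ?_, hWsubC, Finset.Subset.refl W, by rw [hW2]; exact ⟨1, rfl⟩,
        Or.inr he0H2, hcross_of_H1 e0 he0H1, ?_, ?_⟩
      · rw [hWset]; exact matchOn_pair h12
      · intro e he _
        rw [Finset.mem_singleton] at he
        subst he
        exact not_mem_cutSet (iff_of_true (Finset.mem_coe.mpr (hWU u1 hu1W))
          (Finset.mem_coe.mpr (hWU u2 hu2W)))
      · intro e he hne
        apply hnocross_H2 e he
        intro hcon
        have : e ∈ H1 ∩ H2 := Finset.mem_inter.mpr ⟨hcon, he⟩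
        rw [he0] at this
        exact hne (Finset.mem_singleton.mp this)
  obtain ⟨E0, VE0, estar, hE0mo, hVE0sub, hWVE0, hVE0even, hestarmem, hestarcross, hE0nc, hH2nc⟩ := key
  -- assemble F' = H2 ∪ E0 ∪ PC ∪ PD
  set RC : Finset (Fin n) := (Cfin \ SC2) \ VE0 with hRC
  set RD : Finset (Fin n) := Dfin \ SD2 with hRD
  have hkeven : Even (k - 3) := k3_even k hk hk3
  have hRCcard : RC.card = (k - 3) - VE0.card := by
    rw [hRC, Finset.card_sdiff_of_subset hVE0sub, Finset.card_sdiff_of_subset hSC2sub, hCk, hSC2card]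
  have hVE0le : VE0.card ≤ k - 3 := by
    have := Finset.card_le_card hVE0sub
    rw [Finset.card_sdiff_of_subset hSC2sub, hCk, hSC2card] at this
    exact this
  have hRCeven : Even RC.card := by
    rw [Nat.even_iff] at *
    rw [hRCcard]
    rcases hVE0even with h
    omega
  have hRDcard : RD.card = k - 3 := by
    rw [hRD, Finset.card_sdiff_of_subset hSD2sub, hDk, hSD2card]
  have hRDeven : Even RD.card := by rw [hRDcard]; exact hkeven
  obtain ⟨PC, hPC⟩ := exists_matchOn RC hRCeven
  obtain ⟨PD, hPD⟩ := exists_matchOn RD hRDeven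
  -- H2 is a perfect matching on SC2 ∪ SD2
  have hSC2SD2dis : Disjoint SC2 SD2 := by
    rw [Finset.disjoint_left]
    intro v hv hv'
    exact Finset.disjoint_left.mp hCDdis (hSC2sub hv) (hSD2sub hv')
  have hH2mo : MatchOn (SC2 ∪ SD2) H2 := by
    refine ⟨hF.1.subset h2F, ?_, ?_, ?_⟩
    · intro e he v hv
      rcases (hmemF e (h2F he) v).mp hv with rfl | rfl
      · exact Finset.mem_union_left _ (Finset.mem_image_of_mem ce he)
      · exact Finset.mem_union_right _ (Finset.mem_image_of_mem de he)
    · intro v hv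
      rcases Finset.mem_union.mp hv with h | h
      · obtain ⟨e, he, rfl⟩ := Finset.mem_image.mp h
        exact ⟨e, he, (hmemF e (h2F he) _).mpr (Or.inl rfl)⟩
      · obtain ⟨e, he, rfl⟩ := Finset.mem_image.mp h
        exact ⟨e, he, (hmemF e (h2F he) _).mpr (Or.inr rfl)⟩
    · rw [Finset.card_union_of_disjoint hSC2SD2dis, hSC2card, hSD2card, h2c]
  -- disjointness of vertex supports
  have hdis1 : Disjoint (SC2 ∪ SD2) VE0 := by
    rw [Finset.disjoint_left]
    intro v hv hv'
    have hv'' := Finset.mem_sdiff.mp (hVE0sub hv')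
    rcases Finset.mem_union.mp hv with h | h
    · exact hv''.2 h
    · exact Finset.disjoint_left.mp hCDdis hv''.1 (hSD2sub h)
  have hdis2 : Disjoint ((SC2 ∪ SD2) ∪ VE0) (RC ∪ RD) := by
    rw [Finset.disjoint_left]
    intro v hv hv'
    rcases Finset.mem_union.mp hv' with h' | h'
    · have h'' := Finset.mem_sdiff.mp h'
      have hC := Finset.mem_sdiff.mp h''.1
      rcases Finset.mem_union.mp hv with h | h
      · rcases Finset.mem_union.mp h with h2 | h2
        · exact hC.2 h2
        · exact Finset.disjoint_left.mp hCDdis hC.1 (hSD2sub h2)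
      · exact h''.2 h
    · have h'' := Finset.mem_sdiff.mp h'
      rcases Finset.mem_union.mp hv with h | h
      · rcases Finset.mem_union.mp h with h2 | h2
        · exact Finset.disjoint_left.mp hCDdis (hSC2sub h2) h''.1
        · exact h''.2 h2
      · exact Finset.disjoint_left.mp hCDdis (Finset.mem_sdiff.mp (hVE0sub h)).1 h''.1
  have hdis3 : Disjoint RC RD := by
    rw [Finset.disjoint_left]
    intro v hv hv'
    exact Finset.disjoint_left.mp hCDdis
      (Finset.mem_sdiff.mp (Finset.mem_sdiff.mp hv).1).1 (Finset.mem_sdiff.mp hv').1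
  have hmoF : MatchOn (((SC2 ∪ SD2) ∪ VE0) ∪ (RC ∪ RD)) ((H2 ∪ E0) ∪ (PC ∪ PD)) :=
    ((hH2mo.union hE0mo hdis1).union (hPC.union hPD hdis3)) hdis2
  have hset : ((SC2 ∪ SD2) ∪ VE0) ∪ (RC ∪ RD) = Cfin ∪ Dfin := by
    ext v
    simp only [Finset.mem_union, Finset.mem_sdiff, hRC, hRD]
    constructor
    · rintro (((h | h) | h) | (h | h))
      · exact Or.inl (hSC2sub h)
      · exact Or.inr (hSD2sub h)
      · exact Or.inl (Finset.mem_sdiff.mp (hVE0sub h)).1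
      · exact Or.inl h.1.1
      · exact Or.inr h.1
    · rintro (h | h)
      · by_cases h2 : v ∈ SC2
        · tauto
        · by_cases h3 : v ∈ VE0 <;> tauto
      · by_cases h2 : v ∈ SD2 <;> tauto
  rw [hset] at hmoF
  set F' : Finset (Edge n) := (H2 ∪ E0) ∪ (PC ∪ PD) with hF'
  have hCfinDfincard : (Cfin ∪ Dfin).card = 2 * k := by
    rw [Finset.card_union_of_disjoint hCDdis, hCk, hDk]; omega
  have hF'card : F'.card = k := by
    have := hmoF.2.2.2
    rw [hCfinDfincard] at this
    omega
  have hinCD : ∀ v : Fin n, v ∈ Cfin ∪ Dfin ↔ inCD f v := by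
    intro v
    rw [Finset.mem_union, hmemC, hmemD]
    rfl
  have hestarF' : estar ∈ F' := by
    rcases hestarmem with h | h
    · exact Finset.mem_union_left _ (Finset.mem_union_right _ h)
    · exact Finset.mem_union_left _ (Finset.mem_union_left _ h)
  refine ⟨F', estar, hmoF.1, hF'card, fun e he => Finset.mem_union_left _ (Finset.mem_union_left _ he),
    ?_, ?_, hestarF', hestarcross, ?_⟩
  · -- insideCD
    intro e he
    obtain ⟨a, b, rfl⟩ := edge_exists e
    refine ⟨a, b, rfl, ?_, ?_⟩
    · exact (hinCD a).mp (hmoF.2.1 _ he a (by simp))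
    · exact (hinCD b).mp (hmoF.2.1 _ he b (Sym2.mem_mk_right a b))
  · -- cover
    intro v hv
    exact hmoF.2.2.1 v ((hinCD v).mpr hv)
  · -- no other crossings
    intro e he hne
    rcases Finset.mem_union.mp he with h | h
    · rcases Finset.mem_union.mp h with h2 | h2
      · exact hH2nc e h2 hne
      · exact hE0nc e h2 hne
    · -- PC ∪ PD edges
      obtain ⟨a, b, rfl⟩ := edge_exists e
      rcases Finset.mem_union.mp h with h2 | h2
      · -- PC : both endpoints not in U
        have ha : a ∈ RC := hPC.2.1 _ h2 a (by simp)
        have hb : b ∈ RC := hPC.2.1 _ h2 b (Sym2.mem_mk_right a b)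
        have hnotU : ∀ x, x ∈ RC → x ∉ U := by
          intro x hx
          have hx' := Finset.mem_sdiff.mp hx
          have hxC := Finset.mem_sdiff.mp hx'.1
          apply hU2 _ ((hmemC x).mp hxC.1)
          intro hxSC1
          exact hx'.2 (hWVE0 (Finset.mem_sdiff.mpr ⟨hxSC1, hxC.2⟩))
        exact not_mem_cutSet (iff_of_false (fun hc => hnotU a ha (Finset.mem_coe.mp hc))
          (fun hc => hnotU b hb (Finset.mem_coe.mp hc)))
      · -- PD : both endpoints D-labelled
        have ha : a ∈ RD := hPD.2.1 _ h2 a (by simp)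
        have hb : b ∈ RD := hPD.2.1 _ h2 b (Sym2.mem_mk_right a b)
        have hnotU : ∀ x, x ∈ RD → x ∉ U := fun x hx =>
          hUD x ((hmemD x).mp (Finset.mem_sdiff.mp hx).1)
        exact not_mem_cutSet (iff_of_false (fun hc => hnotU a ha (Finset.mem_coe.mp hc))
          (fun hc => hnotU b hb (Finset.mem_coe.mp hc)))


-- MORE4

set_option maxHeartbeats 2000000 in
lemma extremal_family {α : Type*} [DecidableEq α] (F : Finset α) (G : Finset (Finset α))
    (hG3 : ∀ H ∈ G, H ⊆ F ∧ H.card = 3)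
    (hpair : ∀ H1 ∈ G, ∀ H2 ∈ G, H1 ≠ H2 → 2 ≤ (H1 ∩ H2).card)
    (hF4 : 4 ≤ F.card) : G.card ≤ F.card := by
  classical
  by_cases htriv : ∀ H1 ∈ G, ∀ H2 ∈ G, H1 = H2
  · have : G.card ≤ 1 := Finset.card_le_one.mpr htriv
    omega
  push_neg at htriv
  obtain ⟨H1, h1G, H2, h2G, hne⟩ := htriv
  have h1c : H1.card = 3 := (hG3 H1 h1G).2
  have h2c : H2.card = 3 := (hG3 H2 h2G).2
  set P := H1 ∩ H2 with hP
  have hP1 : P ⊆ H1 := Finset.inter_subset_left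
  have hP2 : P ⊆ H2 := Finset.inter_subset_right
  have hPcard : P.card = 2 := by
    have hle : P.card ≤ 3 := h1c ▸ Finset.card_le_card hP1
    have hge : 2 ≤ P.card := hpair H1 h1G H2 h2G hne
    rcases Nat.lt_or_ge P.card 3 with h | h
    · omega
    · exfalso
      have hPH1 : P = H1 := Finset.eq_of_subset_of_card_le hP1 (by omega)
      have hPH2 : P = H2 := Finset.eq_of_subset_of_card_le hP2 (by omega)
      exact hne (hPH1 ▸ hPH2)
  by_cases hall : ∀ H ∈ G, P ⊆ H
  · -- pencil case
    have hinj : Set.InjOn (· \ P) ↑G := by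
      intro X hX Y hY hXY
      have hX' : X = X \ P ∪ P := (Finset.sdiff_union_of_subset (hall X (Finset.mem_coe.mp hX))).symm
      have hY' : Y = Y \ P ∪ P := (Finset.sdiff_union_of_subset (hall Y (Finset.mem_coe.mp hY))).symm
      rw [hX', hY']
      simp only at hXY
      rw [hXY]
    calc G.card = (G.image (· \ P)).card := (Finset.card_image_of_injOn hinj).symm
      _ ≤ (F.powersetCard 1).card := by
          apply Finset.card_le_card
          intro X hX
          obtain ⟨H, hH, rfl⟩ := Finset.mem_image.mp hX
          rw [Finset.mem_powersetCard]
          refine ⟨Finset.Subset.trans Finset.sdiff_subset (hG3 H hH).1, ?_⟩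
          rw [Finset.card_sdiff_of_subset (hall H hH), (hG3 H hH).2, hPcard]
      _ = F.card := by rw [Finset.card_powersetCard, Nat.choose_one_right]
  · -- 4-set case
    push_neg at hall
    obtain ⟨H3, h3G, hnP⟩ := hall
    have h3c : H3.card = 3 := (hG3 H3 h3G).2
    obtain ⟨p, hpP, hpH3⟩ := Finset.not_subset.mp hnP
    have hne31 : H3 ≠ H1 := fun h => hpH3 (h ▸ hP1 hpP)
    have hne32 : H3 ≠ H2 := fun h => hpH3 (h ▸ hP2 hpP)
    -- name the elements
    obtain ⟨p', hp'⟩ := Finset.card_eq_one.mp (by rw [Finset.card_erase_of_mem hpP, hPcard])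
    have hp'P : p' ∈ P := (Finset.erase_subset p P) (hp' ▸ Finset.mem_singleton_self p')
    have hp'ne : p' ≠ p := Finset.ne_of_mem_erase (hp' ▸ Finset.mem_singleton_self p')
    have hPeq : P = {p, p'} := by
      have h1 : ({p, p'} : Finset α) ⊆ P := by
        intro x hx
        rcases Finset.mem_insert.mp hx with rfl | hx
        · exact hpP
        · rw [Finset.mem_singleton.mp hx]; exact hp'P
      exact (Finset.eq_of_subset_of_card_le h1 (by
        rw [Finset.card_insert_of_notMem (by simpa using hp'ne.symm), Finset.card_singleton, hPcard])).symm
    obtain ⟨c, hc⟩ := Finset.card_eq_one.mp (by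
      rw [Finset.card_sdiff_of_subset hP1, h1c, hPcard] : (H1 \ P).card = 1)
    obtain ⟨d, hd⟩ := Finset.card_eq_one.mp (by
      rw [Finset.card_sdiff_of_subset hP2, h2c, hPcard] : (H2 \ P).card = 1)
    have hcH1 : c ∈ H1 := (Finset.sdiff_subset) (hc ▸ Finset.mem_singleton_self c)
    have hcP : c ∉ P := (Finset.mem_sdiff.mp (hc ▸ Finset.mem_singleton_self c)).2
    have hdH2 : d ∈ H2 := (Finset.sdiff_subset) (hd ▸ Finset.mem_singleton_self d)
    have hdP : d ∉ P := (Finset.mem_sdiff.mp (hd ▸ Finset.mem_singleton_self d)).2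
    have hH1eq : H1 = {p, p', c} := by
      have : H1 = P ∪ (H1 \ P) := (Finset.union_sdiff_of_subset hP1).symm
      rw [this, hc, hPeq]
      ext x
      simp only [Finset.mem_union, Finset.mem_insert, Finset.mem_singleton]
      tauto
    have hH2eq : H2 = {p, p', d} := by
      have : H2 = P ∪ (H2 \ P) := (Finset.union_sdiff_of_subset hP2).symm
      rw [this, hd, hPeq]
      ext x
      simp only [Finset.mem_union, Finset.mem_insert, Finset.mem_singleton]
      tauto
    have hcd : c ≠ d := by
      intro h
      subst h
      exact hcP (Finset.mem_inter.mpr ⟨hcH1, hdH2⟩)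
    -- H3 = {p', c, d}
    have h31 : H3 ∩ H1 = {p', c} := by
      have hsub : H3 ∩ H1 ⊆ {p', c} := by
        intro x hx
        have hx1 := (Finset.mem_inter.mp hx).1
        have hx2 := (Finset.mem_inter.mp hx).2
        rw [hH1eq] at hx2
        simp only [Finset.mem_insert, Finset.mem_singleton] at hx2 ⊢
        rcases hx2 with rfl | h
        · exact absurd hx1 hpH3
        · exact h
      have hcard2 : ({p', c} : Finset α).card = 2 := by
        rw [Finset.card_insert_of_notMem (by
          intro hmem
          rw [Finset.mem_singleton] at hmem
          exact hcP (hmem ▸ hp'P)), Finset.card_singleton]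
      exact Finset.eq_of_subset_of_card_le hsub (by
        rw [hcard2]; exact hpair H3 h3G H1 h1G hne31)
    have h32 : H3 ∩ H2 = {p', d} := by
      have hsub : H3 ∩ H2 ⊆ {p', d} := by
        intro x hx
        have hx1 := (Finset.mem_inter.mp hx).1
        have hx2 := (Finset.mem_inter.mp hx).2
        rw [hH2eq] at hx2
        simp only [Finset.mem_insert, Finset.mem_singleton] at hx2 ⊢
        rcases hx2 with rfl | h
        · exact absurd hx1 hpH3
        · exact h
      have hcard2 : ({p', d} : Finset α).card = 2 := by
        rw [Finset.card_insert_of_notMem (by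
          intro hmem
          rw [Finset.mem_singleton] at hmem
          exact hdP (hmem ▸ hp'P)), Finset.card_singleton]
      exact Finset.eq_of_subset_of_card_le hsub (by
        rw [hcard2]; exact hpair H3 h3G H2 h2G hne32)
    have hp'H3 : p' ∈ H3 := (Finset.mem_inter.mp (h31 ▸ (Finset.mem_insert_self p' {c}))).1
    have hcH3 : c ∈ H3 := by
      have : c ∈ H3 ∩ H1 := h31 ▸ (by simp)
      exact (Finset.mem_inter.mp this).1
    have hdH3 : d ∈ H3 := by
      have : d ∈ H3 ∩ H2 := h32 ▸ (by simp)
      exact (Finset.mem_inter.mp this).1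
    have hH3eq : H3 = {p', c, d} := by
      have hsub : ({p', c, d} : Finset α) ⊆ H3 := by
        intro x hx
        simp only [Finset.mem_insert, Finset.mem_singleton] at hx
        rcases hx with rfl | rfl | rfl <;> assumption
      have hcard3 : ({p', c, d} : Finset α).card = 3 := by
        rw [Finset.card_insert_of_notMem, Finset.card_insert_of_notMem, Finset.card_singleton]
        · simpa using hcd
        · simp only [Finset.mem_insert, Finset.mem_singleton]
          push_neg
          exact ⟨fun h => hcP (h ▸ hp'P), fun h => hdP (h ▸ hp'P)⟩
      exact (Finset.eq_of_subset_of_card_le hsub (by omega)).symm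
    -- every member of G is inside Q = {p, p', c, d}
    have hQcard : (insert p {p', c, d} : Finset α).card ≤ 4 := by
      refine le_trans (Finset.card_insert_le _ _) (Nat.succ_le_succ ?_)
      refine le_trans (Finset.card_insert_le _ _) (Nat.succ_le_succ ?_)
      refine le_trans (Finset.card_insert_le _ _) (Nat.succ_le_succ ?_)
      rw [Finset.card_singleton]
    have hmemQ : ∀ x : α, x = p ∨ x = p' ∨ x = c ∨ x = d → x ∈ (insert p {p', c, d} : Finset α) := by
      intro x hx
      simp only [Finset.mem_insert, Finset.mem_singleton]
      exact hx
    have hallQ : ∀ H ∈ G, H ⊆ insert p {p', c, d} := by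
      intro H hH
      by_cases e1 : H = H1
      · intro x hx
        rw [e1, hH1eq] at hx
        simp only [Finset.mem_insert, Finset.mem_singleton] at hx
        exact hmemQ x (by tauto)
      by_cases e2 : H = H2
      · intro x hx
        rw [e2, hH2eq] at hx
        simp only [Finset.mem_insert, Finset.mem_singleton] at hx
        exact hmemQ x (by tauto)
      by_cases e3 : H = H3
      · intro x hx
        rw [e3, hH3eq] at hx
        simp only [Finset.mem_insert, Finset.mem_singleton] at hx
        exact hmemQ x (by tauto)
      -- general member
      intro x hxH
      by_contra hxQ
      have hHc : H.card = 3 := (hG3 H hH).2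
      have herase : (H.erase x).card = 2 := by rw [Finset.card_erase_of_mem hxH, hHc]
      have hkey : ∀ K, K ∈ G → K ≠ H → x ∉ K → H ∩ K = H.erase x := by
        intro K hK hKne hxK
        have hsub : H ∩ K ⊆ H.erase x := by
          intro y hy
          rw [Finset.mem_erase]
          exact ⟨fun h => hxK (h ▸ (Finset.mem_inter.mp hy).2), (Finset.mem_inter.mp hy).1⟩
        exact Finset.eq_of_subset_of_card_le hsub (by
          rw [herase]; exact hpair H hH K hK (fun h => hKne h.symm))
      have hx1 : x ∉ H1 := by
        intro h
        rw [hH1eq] at h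
        simp only [Finset.mem_insert, Finset.mem_singleton] at h
        exact hxQ (hmemQ x (by tauto))
      have hx2 : x ∉ H2 := by
        intro h
        rw [hH2eq] at h
        simp only [Finset.mem_insert, Finset.mem_singleton] at h
        exact hxQ (hmemQ x (by tauto))
      have hx3 : x ∉ H3 := by
        intro h
        rw [hH3eq] at h
        simp only [Finset.mem_insert, Finset.mem_singleton] at h
        exact hxQ (hmemQ x (by tauto))
      have hk1 := hkey H1 h1G (fun h => e1 h.symm) hx1
      have hk2 := hkey H2 h2G (fun h => e2 h.symm) hx2
      have hk3 := hkey H3 h3G (fun h => e3 h.symm) hx3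
      have hsubP : H.erase x ⊆ P := by
        intro y hy
        refine Finset.mem_inter.mpr ⟨?_, ?_⟩
        · exact (Finset.mem_inter.mp (hk1 ▸ hy : y ∈ H ∩ H1)).2
        · exact (Finset.mem_inter.mp (hk2 ▸ hy : y ∈ H ∩ H2)).2
      have hsub3 : H.erase x ⊆ H3 := fun y hy =>
        (Finset.mem_inter.mp (hk3 ▸ hy : y ∈ H ∩ H3)).2
      have hfinal : H.erase x ⊆ P.erase p := by
        intro y hy
        rw [Finset.mem_erase]
        exact ⟨fun h => hpH3 (h ▸ hsub3 hy), hsubP hy⟩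
      have := Finset.card_le_card hfinal
      rw [herase, hp', Finset.card_singleton] at this
      omega
    -- conclude
    have hGsub : G ⊆ (insert p {p', c, d} : Finset α).powersetCard 3 := by
      intro H hH
      rw [Finset.mem_powersetCard]
      exact ⟨hallQ H hH, (hG3 H hH).2⟩
    calc G.card ≤ ((insert p {p', c, d} : Finset α).powersetCard 3).card :=
          Finset.card_le_card hGsub
      _ = (insert p {p', c, d} : Finset α).card.choose 3 := Finset.card_powersetCard 3 _
      _ ≤ Nat.choose 4 3 := Nat.choose_le_choose 3 hQcard
      _ ≤ F.card := by norm_num; omega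

-- MORE5

lemma two_le_inter_of_good (k m : ℕ) (hk : Odd k) (hk3 : 3 ≤ k) (hm : Odd m) (hk11 : 11 ≤ k)
    (ε : ℝ) (hε : 0 < ε)
    (Uu : Set (Finset (Fin (npar k m)))) (Mm : Set (Finset (Edge (npar k m))))
    (hUu : ∀ U ∈ Uu, U.card = tpar k m) (hMm : ∀ M ∈ Mm, IsPM M)
    (hQ1 : ∀ p ∈ Uu ×ˢ Mm, p ∉ Qset (npar k m) (tpar k m) 1)
    (f : Fin (npar k m) → Lbl m) (hf : IsPartition (npar k m) k m f)
    (F : Finset (Edge (npar k m))) (hF : IsCDMatching f k F)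
    (H1 H2 : Finset (Edge (npar k m))) (h1F : H1 ⊆ F) (h2F : H2 ⊆ F)
    (h1c : H1.card = 3) (h2c : H2.card = 3) (hne : H1 ≠ H2)
    (hg1 : Good ε k (tpar k m) f Mm Uu H1) (hg2 : Good ε k (tpar k m) f Mm Uu H2) :
    2 ≤ (H1 ∩ H2).card := by
  by_contra hcon
  push_neg at hcon
  have hint : (H1 ∩ H2).card ≤ 1 := by omega
  have hεpos : (0 : ℝ) < 1 / (1 + ε) := by positivity
  -- extract U from U-goodness of H1
  have hU0 : 0 < pUexH (tpar k m) f Uu H1 := by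
    have h := hg1.2.1
    nlinarith [hg1.2.1]
  have hUne : {U | U ∈ UallT (tpar k m) f ∧
      (U : Set (Fin (npar k m))) ∩ Cset f = VSet H1 ∩ Cset f ∧ U ∈ Uu}.Nonempty := by
    apply nonempty_of_div_pos
    unfold pUexH pUexSet at hU0
    exact hU0
  obtain ⟨U, hUall, hUeq, hUuU⟩ := hUne
  have hUC : ∀ v : Fin (npar k m), f v = Lbl.C → (v ∈ U ↔ v ∈ VSet H1) := by
    intro v hv
    have := Set.ext_iff.mp hUeq v
    simp only [Set.mem_inter_iff, Finset.mem_coe] at this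
    constructor
    · intro h
      exact (this.mp ⟨h, hv⟩).1
    · intro h
      exact (this.mpr ⟨h, hv⟩).1
  have hUD : ∀ v : Fin (npar k m), f v = Lbl.D → v ∉ U := by
    intro v hv hvU
    rcases hUall.2.1 v hvU with ⟨i, hA⟩ | hC
    · rw [hA] at hv; cases hv
    · rw [hC] at hv; cases hv
  -- construct F'
  obtain ⟨F', estar, hF'm, hF'card, hH2F', hF'in, hF'cov, hestarF', hestarcross, hF'nc⟩ :=
    exists_Fprime hk hk11 hf.2.1 hf.2.2.1 hF h1F h2F h1c h2c hint hUC hUD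
  -- extract M from M-goodness of H2
  have hM0 : 0 < pM f Mm F' := by
    have hb := (hg2.1.2 F' hF'm hF'card hH2F' hF'in).1
    have hp := hg2.1.1
    linarith
  have hMne : {M | M ∈ MallT f ∧ F' ⊆ M ∧ M ∈ Mm}.Nonempty := by
    apply nonempty_of_div_pos
    unfold pM at hM0
    exact hM0
  obtain ⟨M, hMall, hF'M, hMMm⟩ := hMne
  -- compute the cut
  have hcut : ((M : Set (Edge (npar k m))) ∩ cutSet (U : Set (Fin (npar k m)))).ncard = 1 := by
    rw [cut_eq_singleton hUall hMall hF'M hF'cov hestarF' hestarcross hF'nc]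
    exact Set.ncard_singleton _
  exact hQ1 (U, M) ⟨hUuU, hMMm⟩ ⟨hUu U hUuU, hMall.1, hcut⟩

-- MORE6

set_option maxHeartbeats 1000000 in
/-- For any rectangle `𝓡 = 𝓤 × 𝓜` with `μ₁(𝓡) = 0`, any partition `T` and any `k`-matching
`F ⊆ C × D`, the fraction of 3-element subsets `H ⊆ F` with `(T,H)` good is at most `100/k²`. -/
theorem frac_good_3subsets_le (k m : ℕ) (hk : Odd k) (hk3 : 3 ≤ k) (hm : Odd m)
    (ε : ℝ) (hε : 0 < ε)
    (Uu : Set (Finset (Fin (npar k m)))) (Mm : Set (Finset (Edge (npar k m))))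
    (hUu : ∀ U ∈ Uu, U.card = tpar k m) (hMm : ∀ M ∈ Mm, IsPM M)
    (hmu1 : mu (npar k m) (tpar k m) 1 (Uu ×ˢ Mm) = 0)
    (f : Fin (npar k m) → Lbl m) (hf : IsPartition (npar k m) k m f)
    (F : Finset (Edge (npar k m))) (hF : IsCDMatching f k F) :
    ({H | H ⊆ F ∧ H.card = 3 ∧ Good ε k (tpar k m) f Mm Uu H}.ncard : ℝ) /
        ({H : Finset (Edge (npar k m)) | H ⊆ F ∧ H.card = 3}.ncard : ℝ) ≤
      100 / (k : ℝ) ^ 2 := by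
  classical
  -- the denominator is the number of 3-subsets of F
  have hFcard : F.card = k := hF.2.1
  have hdset : {H : Finset (Edge (npar k m)) | H ⊆ F ∧ H.card = 3} = ↑(F.powersetCard 3) := by
    ext H
    simp only [Set.mem_setOf_eq, Finset.mem_coe, Finset.mem_powersetCard]
  have hdcard : {H : Finset (Edge (npar k m)) | H ⊆ F ∧ H.card = 3}.ncard = k.choose 3 := by
    rw [hdset, Set.ncard_coe_finset, Finset.card_powersetCard, hFcard]
  have hchoosepos : 0 < k.choose 3 := Nat.choose_pos hk3
  have hdenpos : (0 : ℝ) < ({H : Finset (Edge (npar k m)) | H ⊆ F ∧ H.card = 3}.ncard : ℝ) := by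
    rw [hdcard]; exact_mod_cast hchoosepos
  have hk2pos : (0 : ℝ) < (k : ℝ) ^ 2 := by positivity
  -- the numerator as a finset
  set Gfin : Finset (Finset (Edge (npar k m))) :=
    (F.powersetCard 3).filter (fun H => Good ε k (tpar k m) f Mm Uu H) with hGfin
  have hnset : {H | H ⊆ F ∧ H.card = 3 ∧ Good ε k (tpar k m) f Mm Uu H} = ↑Gfin := by
    ext H
    simp only [Set.mem_setOf_eq, hGfin, Finset.coe_filter, Finset.mem_powersetCard]
    tauto
  have hncard : {H | H ⊆ F ∧ H.card = 3 ∧ Good ε k (tpar k m) f Mm Uu H}.ncard = Gfin.card := by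
    rw [hnset, Set.ncard_coe_finset]
  rw [hncard]
  by_cases hk11 : k < 11
  · -- trivial case: the bound is at least 1
    have hsub : Gfin.card ≤ k.choose 3 := by
      calc Gfin.card ≤ (F.powersetCard 3).card := Finset.card_le_card (Finset.filter_subset _ _)
        _ = k.choose 3 := by rw [Finset.card_powersetCard, hFcard]
    have h1 : (Gfin.card : ℝ) / ({H : Finset (Edge (npar k m)) | H ⊆ F ∧ H.card = 3}.ncard : ℝ) ≤ 1 := by
      rw [div_le_one hdenpos, hdcard]
      exact_mod_cast hsub
    have h2 : (1 : ℝ) ≤ 100 / (k : ℝ) ^ 2 := by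
      rw [le_div_iff₀ hk2pos, one_mul]
      have : (k : ℝ) ≤ 10 := by exact_mod_cast Nat.lt_succ_iff.mp hk11
      nlinarith [Nat.cast_nonneg (α := ℝ) k]
    linarith
  · push_neg at hk11
    have hQ1 := rect_inter_Q1_empty k m hk hk3 hm Uu Mm hmu1
    have hpair : ∀ H1 ∈ Gfin, ∀ H2 ∈ Gfin, H1 ≠ H2 → 2 ≤ (H1 ∩ H2).card := by
      intro H1 h1 H2 h2 hne
      rw [hGfin, Finset.mem_filter, Finset.mem_powersetCard] at h1 h2
      exact two_le_inter_of_good k m hk hk3 hm hk11 ε hε Uu Mm hUu hMm hQ1 f hf F hF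
        H1 H2 h1.1.1 h2.1.1 h1.1.2 h2.1.2 hne h1.2 h2.2
    have hGk : Gfin.card ≤ k := by
      have := extremal_family F Gfin (fun H hH => by
        rw [hGfin, Finset.mem_filter, Finset.mem_powersetCard] at hH
        exact hH.1) hpair (by rw [hFcard]; omega)
      rwa [hFcard] at this
    -- arithmetic: k / C(k,3) ≤ 100 / k²
    have hdesc : k.choose 3 * 6 = (k - 2) * ((k - 1) * k) := by
      have h1 := Nat.descFactorial_eq_factorial_mul_choose k 3
      have h2 : k.descFactorial 3 = (k - 2) * ((k - 1) * k) := by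
        simp [Nat.descFactorial_succ, Nat.descFactorial_zero]
      norm_num [Nat.factorial] at h1
      omega
    have hnat : k * k ^ 2 * 6 ≤ 100 * k.choose 3 * 6 := by
      rw [mul_assoc 100, hdesc]
      obtain ⟨a, ha⟩ : ∃ a, k = a + 11 := ⟨k - 11, by omega⟩
      subst ha
      have e1 : a + 11 - 2 = a + 9 := by omega
      have e2 : a + 11 - 1 = a + 10 := by omega
      rw [e1, e2]
      have key2 : 6 * (a + 11) ^ 2 ≤ 100 * ((a + 9) * (a + 10)) := by
        have hb : 6 * (a + 11) ^ 2 = 6 * (a * a) + 132 * a + 726 := by ring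
        have hb2 : 100 * ((a + 9) * (a + 10)) = 100 * (a * a) + 1900 * a + 9000 := by ring
        rw [hb, hb2]
        generalize a * a = b
        omega
      calc (a + 11) * (a + 11) ^ 2 * 6 = 6 * (a + 11) ^ 2 * (a + 11) := by ring
        _ ≤ 100 * ((a + 9) * (a + 10)) * (a + 11) := mul_le_mul_left key2 (a + 11)
        _ = 100 * ((a + 9) * ((a + 10) * (a + 11))) := by ring
    rw [div_le_div_iff₀ hdenpos hk2pos, hdcard]
    have hcast : (Gfin.card : ℝ) ≤ (k : ℝ) := by exact_mod_cast hGk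
    have hnat' : (k : ℝ) * (k : ℝ) ^ 2 ≤ 100 * (k.choose 3 : ℝ) := by
      have := hnat
      have h6 : k * k ^ 2 ≤ 100 * k.choose 3 := by omega
      exact_mod_cast h6
    nlinarith [Nat.cast_nonneg (α := ℝ) (k.choose 3), hk2pos, Nat.cast_nonneg (α := ℝ) Gfin.card]

end MatchingLB
end
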